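/- arXiv:1803.08198 — 6 statements merged into one kernel-verified Lean document; each statement's English description precedes it below -/
import Mathlib

section
/- Under the SUCAG setup, for every k ≥ 1 the gradient-approximation error satisfies ‖e^k‖ ≤ (1/(2N)) ∑_{i≠i_k} L_{H,i} ‖θ^k − θ^{τ_i^{k−1}}‖² + (1/2)(1 − 1/N) L_{H,i_k} ‖θ^k − θ^{τ_{i_k}^{k−1}}‖². -/
open scoped BigOperators RealInnerProductSpace

/-- Taylor remainder bound for a function with Lipschitz derivative. -/
theorem taylor_remainder {E : Type*} {G' : Type*} [NormedAddCommGroup E] [NormedSpace ℝ E]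
    [NormedAddCommGroup G'] [NormedSpace ℝ G']
    (G : E → G') (C : ℝ) (hG : Differentiable ℝ G)
    (hLip : ∀ a b, ‖fderiv ℝ G a - fderiv ℝ G b‖ ≤ C * ‖a - b‖) (x y : E) :
    ‖G x - G y - fderiv ℝ G y (x - y)‖ ≤ C / 2 * ‖x - y‖ ^ 2 := by
  set v := x - y with hv
  set A := fderiv ℝ G y with hA
  set φ : ℝ → G' := fun t => G (y + t • v) - G y - t • A v with hφ
  have hline : ∀ t : ℝ, HasDerivAt (fun t : ℝ => y + t • v) v t := by
    intro t
    simpa using ((hasDerivAt_id t).smul_const v).const_add y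
  have hφ' : ∀ t : ℝ, HasDerivAt φ ((fderiv ℝ G (y + t • v)) v - A v) t := by
    intro t
    have h1 : HasDerivAt (fun t : ℝ => G (y + t • v)) ((fderiv ℝ G (y + t • v)) v) t :=
      (hG (y + t • v)).hasFDerivAt.comp_hasDerivAt t (hline t)
    exact ((h1.sub_const (G y)).sub ((hasDerivAt_id t).smul_const (A v))).congr_deriv (by simp)
  have hB : ∀ t : ℝ, HasDerivAt (fun t : ℝ => C * ‖v‖ ^ 2 * (t ^ 2 / 2)) (C * ‖v‖ ^ 2 * t) t := by
    intro t
    have := ((hasDerivAt_pow 2 t).div_const 2).const_mul (C * ‖v‖ ^ 2)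
    exact this.congr_deriv (by push_cast; ring)
  have bound : ∀ t ∈ Set.Ico (0 : ℝ) 1,
      ‖(fderiv ℝ G (y + t • v)) v - A v‖ ≤ C * ‖v‖ ^ 2 * t := by
    intro t ht
    have h1 : ‖(fderiv ℝ G (y + t • v)) v - A v‖
        ≤ ‖fderiv ℝ G (y + t • v) - A‖ * ‖v‖ := by
      have := (fderiv ℝ G (y + t • v) - A).le_opNorm v
      simpa using this
    have h2 : ‖fderiv ℝ G (y + t • v) - A‖ ≤ C * ‖t • v‖ := by
      have := hLip (y + t • v) y
      simpa using this
    have h3 : ‖t • v‖ = t * ‖v‖ := by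
      rw [norm_smul, Real.norm_eq_abs, abs_of_nonneg ht.1]
    calc ‖(fderiv ℝ G (y + t • v)) v - A v‖ ≤ ‖fderiv ℝ G (y + t • v) - A‖ * ‖v‖ := h1
      _ ≤ C * ‖t • v‖ * ‖v‖ := by
          apply mul_le_mul_of_nonneg_right h2 (norm_nonneg v)
      _ = C * ‖v‖ ^ 2 * t := by rw [h3]; ring
  have key := image_norm_le_of_norm_deriv_right_le_deriv_boundary
    (f := φ) (f' := fun t => (fderiv ℝ G (y + t • v)) v - A v)
    (a := 0) (b := 1)
    (fun t _ => (hφ' t).continuousAt.continuousWithinAt)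
    (fun t _ => (hφ' t).hasDerivWithinAt)
    (B := fun t => C * ‖v‖ ^ 2 * (t ^ 2 / 2))
    (by simp [hφ]) hB bound
  have h1 : ‖φ 1‖ ≤ C * ‖v‖ ^ 2 * (1 ^ 2 / 2) := key (by norm_num)
  have hφ1 : φ 1 = G x - G y - A v := by
    have h2 : y + v = x := by rw [hv]; abel
    simp only [hφ, h2, one_smul]
  rw [hφ1] at h1
  calc ‖G x - G y - A v‖ ≤ C * ‖v‖ ^ 2 * (1 ^ 2 / 2) := h1
    _ = C / 2 * ‖v‖ ^ 2 := by ring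

/-- first bound on the SUCAG gradient-approximation error `e^k`. -/
theorem sucag_error_bound_one
    (d N : ℕ) (hd : 1 ≤ d) (hN : 1 ≤ N)
    -- the component functions and Assumption A1
    (f : Fin N → EuclideanSpace ℝ (Fin d) → ℝ)
    (hconv : ∀ i, ConvexOn ℝ Set.univ (f i))
    (hsmooth : ∀ i, ContDiff ℝ 2 (f i))
    (LH : Fin N → ℝ) (hLHpos : ∀ i, 0 < LH i)
    (hLH : ∀ i x y, ‖fderiv ℝ (gradient (f i)) x - fderiv ℝ (gradient (f i)) y‖
      ≤ LH i * ‖x - y‖)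
    (LbarH : ℝ) (hLbarH : IsGreatest (Set.range LH) LbarH)
    -- the sum function, Assumptions A2 and A3
    (F : EuclideanSpace ℝ (Fin d) → ℝ)
    (hF : F = fun x => (N : ℝ)⁻¹ * ∑ i, f i x)
    (L μ : ℝ) (hL : 0 < L) (hμ : 0 < μ)
    (hFLip : ∀ x y, ‖gradient F x - gradient F y‖ ≤ L * ‖x - y‖)
    (hstr : ∀ x y : EuclideanSpace ℝ (Fin d),
      F x + ⟪gradient F x, y - x⟫ + μ / 2 * ‖y - x‖ ^ 2 ≤ F y)
    (θstar : EuclideanSpace ℝ (Fin d)) (hmin : ∀ x, F θstar ≤ F x)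
    -- the SUCAG iterates
    (γ : ℝ) (hγ : 0 < γ)
    (idx : ℕ → Fin N)
    (τ : ℕ → Fin N → ℕ) (hτ : ∀ k, 1 ≤ k → ∀ i, τ k i < k)
    (θ : ℕ → EuclideanSpace ℝ (Fin d))
    (gA : Fin N → ℕ → EuclideanSpace ℝ (Fin d) → EuclideanSpace ℝ (Fin d))
    (hgA : ∀ i k x, gA i k x = gradient (f i) (θ (τ k i))
      + (fderiv ℝ (gradient (f i)) (θ (τ k i))) (x - θ (τ k i)))
    (g : ℕ → EuclideanSpace ℝ (Fin d))
    (hg : ∀ k, g k = (gradient (f (idx k)) (θ k) - gA (idx k) k (θ k))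
      + (N : ℝ)⁻¹ • ∑ i, gA i k (θ k))
    (hrec : ∀ k, 1 ≤ k → θ (k + 1) = θ k - γ • g k)
    -- the gradient-approximation error
    (e : ℕ → EuclideanSpace ℝ (Fin d))
    (he : ∀ k, e k = g k - gradient F (θ k)) :
    ∀ k, 1 ≤ k →
      ‖e k‖ ≤ (1 / (2 * (N : ℝ)))
          * ∑ i ∈ Finset.univ.erase (idx k), LH i * ‖θ k - θ (τ k i)‖ ^ 2
        + (1 / 2) * (1 - 1 / (N : ℝ)) * LH (idx k)
          * ‖θ k - θ (τ k (idx k))‖ ^ 2 := by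
  intro k _
  have hNpos : (0 : ℝ) < N := by exact_mod_cast hN
  -- differentiability facts
  have hdiff : ∀ i, Differentiable ℝ (f i) := fun i =>
    (hsmooth i).differentiable (by norm_num)
  have hdiffgrad : ∀ i, Differentiable ℝ (gradient (f i)) := by
    intro i
    have h1 : ContDiff ℝ 1 (fderiv ℝ (f i)) :=
      (hsmooth i).fderiv_right (by norm_num)
    have h2 : ContDiff ℝ 1 (gradient (f i)) := by
      have := ((InnerProductSpace.toDual ℝ
        (EuclideanSpace ℝ (Fin d))).symm.contDiff (n := 1)).comp h1
      exact this
    exact h2.differentiable one_ne_zero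
  -- the gradient of F is the average of the gradients
  have hgradF : ∀ x, gradient F x = (N : ℝ)⁻¹ • ∑ i, gradient (f i) x := by
    intro x
    have hsum : DifferentiableAt ℝ (fun x => ∑ i, f i x) x :=
      DifferentiableAt.fun_sum fun i _ => (hdiff i).differentiableAt
    have hfd : fderiv ℝ F x = (N : ℝ)⁻¹ • ∑ i, fderiv ℝ (f i) x := by
      rw [hF]
      rw [fderiv_const_mul hsum]
      congr 1
      exact fderiv_fun_sum fun i _ => (hdiff i).differentiableAt
    simp only [gradient, hfd, map_smul, map_sum]
  -- the per-component Taylor remainder bound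
  set D : Fin N → EuclideanSpace ℝ (Fin d) :=
    fun i => gradient (f i) (θ k) - gA i k (θ k) with hD
  have hDbound : ∀ i, ‖D i‖ ≤ LH i / 2 * ‖θ k - θ (τ k i)‖ ^ 2 := by
    intro i
    have := taylor_remainder (gradient (f i)) (LH i) (hdiffgrad i) (hLH i)
      (θ k) (θ (τ k i))
    rw [hD]
    simp only [hgA]
    rw [sub_add_eq_sub_sub]
    exact this
  -- rewrite e k
  have heq : e k = (1 - (N : ℝ)⁻¹) • D (idx k)
      - (N : ℝ)⁻¹ • ∑ i ∈ Finset.univ.erase (idx k), D i := by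
    have hsplit : ∑ i, D i = D (idx k) + ∑ i ∈ Finset.univ.erase (idx k), D i :=
      (Finset.add_sum_erase _ _ (Finset.mem_univ _)).symm
    have h1 : e k = D (idx k) - (N : ℝ)⁻¹ • ∑ i, D i := by
      rw [he, hg, hgradF]
      simp only [hD]
      rw [Finset.sum_sub_distrib, smul_sub]
      abel
    rw [h1, hsplit, smul_add, sub_smul, one_smul]
    abel
  -- norms
  have hN1 : (0 : ℝ) ≤ 1 - (N : ℝ)⁻¹ := by
    have : (N : ℝ)⁻¹ ≤ 1 := by
      rw [inv_le_one_iff₀]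
      right; exact_mod_cast hN
    linarith
  have hnorm : ‖e k‖ ≤ (1 - (N : ℝ)⁻¹) * ‖D (idx k)‖
      + (N : ℝ)⁻¹ * ∑ i ∈ Finset.univ.erase (idx k), ‖D i‖ := by
    rw [heq]
    refine (norm_sub_le _ _).trans ?_
    gcongr
    · rw [norm_smul, Real.norm_eq_abs, abs_of_nonneg hN1]
    · rw [norm_smul, Real.norm_eq_abs, abs_of_nonneg (by positivity)]
      gcongr
      exact norm_sum_le _ _
  have hsum2 : ∑ i ∈ Finset.univ.erase (idx k), ‖D i‖
      ≤ (∑ i ∈ Finset.univ.erase (idx k), LH i * ‖θ k - θ (τ k i)‖ ^ 2) / 2 := by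
    rw [Finset.sum_div]
    refine Finset.sum_le_sum fun i _ => ?_
    have := hDbound i
    linarith
  have hfinal : (1 - (N : ℝ)⁻¹) * ‖D (idx k)‖
      + (N : ℝ)⁻¹ * ∑ i ∈ Finset.univ.erase (idx k), ‖D i‖
      ≤ (1 / (2 * (N : ℝ)))
          * ∑ i ∈ Finset.univ.erase (idx k), LH i * ‖θ k - θ (τ k i)‖ ^ 2
        + (1 / 2) * (1 - 1 / (N : ℝ)) * LH (idx k)
          * ‖θ k - θ (τ k (idx k))‖ ^ 2 := by
    have h1 : (1 - (N : ℝ)⁻¹) * ‖D (idx k)‖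
        ≤ (1 / 2) * (1 - 1 / (N : ℝ)) * LH (idx k) * ‖θ k - θ (τ k (idx k))‖ ^ 2 := by
      have := hDbound (idx k)
      have h2 : (1 - (N : ℝ)⁻¹) * ‖D (idx k)‖
          ≤ (1 - (N : ℝ)⁻¹) * (LH (idx k) / 2 * ‖θ k - θ (τ k (idx k))‖ ^ 2) :=
        mul_le_mul_of_nonneg_left this hN1
      calc (1 - (N : ℝ)⁻¹) * ‖D (idx k)‖
          ≤ (1 - (N : ℝ)⁻¹) * (LH (idx k) / 2 * ‖θ k - θ (τ k (idx k))‖ ^ 2) := h2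
        _ = (1 / 2) * (1 - 1 / (N : ℝ)) * LH (idx k) * ‖θ k - θ (τ k (idx k))‖ ^ 2 := by
            rw [one_div (N : ℝ)]; ring
    have h3 : (N : ℝ)⁻¹ * ∑ i ∈ Finset.univ.erase (idx k), ‖D i‖
        ≤ (1 / (2 * (N : ℝ)))
          * ∑ i ∈ Finset.univ.erase (idx k), LH i * ‖θ k - θ (τ k i)‖ ^ 2 := by
      calc (N : ℝ)⁻¹ * ∑ i ∈ Finset.univ.erase (idx k), ‖D i‖
          ≤ (N : ℝ)⁻¹
            * ((∑ i ∈ Finset.univ.erase (idx k), LH i * ‖θ k - θ (τ k i)‖ ^ 2) / 2) :=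
            mul_le_mul_of_nonneg_left hsum2 (by positivity)
        _ = (1 / (2 * (N : ℝ)))
            * ∑ i ∈ Finset.univ.erase (idx k), LH i * ‖θ k - θ (τ k i)‖ ^ 2 := by
            rw [one_div, mul_inv]; ring
    linarith
  exact hnorm.trans hfinal
end

section
/- Under the SUCAG setup, for every k ≥ 1 the gradient-approximation error satisfies ‖e^k‖ ≤ L̄_H ( 2‖θ^k − θ*‖² + ‖θ^{τ_{i_k}^{k−1}} − θ*‖² + (1/N)∑_{i≠i_k} ‖θ^{τ_i^{k−1}} − θ*‖² ). Consequently, if the delay assumption (A4) k − τ_i^{k−1} ≤ m_k holds for all i, then ‖e^k‖ ≤ 4 L̄_H max_{(k−m_k)_+ ≤ ℓ ≤ k} ‖θ^ℓ − θ*‖², where (x)_+ := max{0,x}. -/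
open scoped BigOperators RealInnerProductSpace

open MeasureTheory InnerProductSpace in
lemma taylor_grad_bound {E : Type*} [NormedAddCommGroup E] [NormedSpace ℝ E] [CompleteSpace E]
    (G : E → E) (C : ℝ) (hC : 0 ≤ C) (hG : Differentiable ℝ G)
    (hL : ∀ a b, ‖fderiv ℝ G a - fderiv ℝ G b‖ ≤ C * ‖a - b‖) (x y : E) :
    ‖G x - G y - (fderiv ℝ G y) (x - y)‖ ≤ C / 2 * ‖x - y‖ ^ 2 := by
  set v := x - y with hv
  set A := fderiv ℝ G y with hA
  set w : ℝ → E := fun t => (fderiv ℝ G (y + t • v)) v - A v with hw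
  have hder : ∀ t : ℝ, HasDerivAt (fun s : ℝ => G (y + s • v) - s • A v) (w t) t := by
    intro t
    have hc : HasDerivAt (fun s : ℝ => y + s • v) v t := by
      simpa using ((hasDerivAt_id t).smul_const v).const_add y
    have h1 : HasDerivAt (fun s : ℝ => G (y + s • v)) ((fderiv ℝ G (y + t • v)) v) t :=
      (hG (y + t • v)).hasFDerivAt.comp_hasDerivAt t hc
    have h2 : HasDerivAt (fun s : ℝ => s • A v) (A v) t := by
      simpa using (hasDerivAt_id t).smul_const (A v)
    exact h1.sub h2
  have hwcont : Continuous w := by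
    have hlip : LipschitzWith ⟨C, hC⟩ (fderiv ℝ G) := by
      apply LipschitzWith.of_dist_le_mul
      intro a b
      rw [dist_eq_norm, dist_eq_norm]; exact hL a b
    have hc1 : Continuous fun t : ℝ => fderiv ℝ G (y + t • v) :=
      hlip.continuous.comp (by continuity)
    exact (hc1.clm_apply continuous_const).sub continuous_const
  have hint : IntervalIntegrable w volume 0 1 := hwcont.intervalIntegrable 0 1
  have hftc : ∫ t in (0:ℝ)..1, w t = G x - A v - G y := by
    have h := intervalIntegral.integral_eq_sub_of_hasDerivAt
      (f := fun s : ℝ => G (y + s • v) - s • A v) (fun t _ => hder t) hint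
    rw [h]
    have : y + v = x := by rw [hv]; abel
    simp [this]
  have hbnd : ∀ᵐ t ∂(volume.restrict (Set.uIoc (0:ℝ) 1)), ‖w t‖ ≤ C * t * ‖v‖ ^ 2 := by
    filter_upwards [ae_restrict_mem measurableSet_uIoc] with t ht
    rw [Set.uIoc_of_le (by norm_num : (0:ℝ) ≤ 1)] at ht
    have h1 : ‖w t‖ ≤ ‖fderiv ℝ G (y + t • v) - A‖ * ‖v‖ := by
      have : w t = (fderiv ℝ G (y + t • v) - A) v := by simp [hw]
      rw [this]
      exact ContinuousLinearMap.le_opNorm _ _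
    have h2 : ‖fderiv ℝ G (y + t • v) - A‖ ≤ C * (t * ‖v‖) := by
      have := hL (y + t • v) y
      simpa [norm_smul, abs_of_nonneg ht.1.le] using this
    calc ‖w t‖ ≤ C * (t * ‖v‖) * ‖v‖ :=
          h1.trans (by nlinarith [norm_nonneg v, norm_nonneg (fderiv ℝ G (y + t • v) - A)])
      _ = C * t * ‖v‖ ^ 2 := by ring
  have hgint : IntervalIntegrable (fun t : ℝ => C * t * ‖v‖ ^ 2) volume 0 1 := by
    apply Continuous.intervalIntegrable; continuity
  have hmain := intervalIntegral.norm_integral_le_abs_of_norm_le hbnd hgint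
  rw [hftc] at hmain
  have hval : ∫ t in (0:ℝ)..1, C * t * ‖v‖ ^ 2 = C / 2 * ‖v‖ ^ 2 := by
    simp only [show ∀ t : ℝ, C * t * ‖v‖ ^ 2 = (C * ‖v‖ ^ 2) * t from fun t => by ring]
    rw [intervalIntegral.integral_const_mul, integral_id]
    ring
  rw [hval] at hmain
  calc ‖G x - G y - A v‖ = ‖G x - A v - G y‖ := by rw [show G x - G y - A v = G x - A v - G y by abel]
    _ ≤ |C / 2 * ‖v‖ ^ 2| := hmain
    _ = C / 2 * ‖v‖ ^ 2 := abs_of_nonneg (by positivity)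

open InnerProductSpace in
lemma grad_contDiff_one {E : Type*} [NormedAddCommGroup E] [InnerProductSpace ℝ E]
    [CompleteSpace E] (f : E → ℝ) (hf : ContDiff ℝ 2 f) :
    Differentiable ℝ (gradient f) := by
  have h1 : ContDiff ℝ 1 (fderiv ℝ f) := hf.fderiv_right (by norm_num)
  have h2 : ContDiff ℝ 1 (gradient f) :=
    ((toDual ℝ E).symm.toContinuousLinearEquiv.contDiff).comp h1
  exact h2.differentiable one_ne_zero

lemma grad_avg {E : Type*} [NormedAddCommGroup E] [InnerProductSpace ℝ E]
    [CompleteSpace E] {N : ℕ} (f : Fin N → E → ℝ) (hf : ∀ i, ContDiff ℝ 2 (f i))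
    (F : E → ℝ) (hF : F = fun x => (N : ℝ)⁻¹ * ∑ i, f i x) (x : E) :
    gradient F x = (N : ℝ)⁻¹ • ∑ i, gradient (f i) x := by
  have hd : ∀ i, DifferentiableAt ℝ (f i) x :=
    fun i => ((hf i).differentiable (by norm_num)).differentiableAt
  have hsum : HasFDerivAt (fun x => ∑ i, f i x) (∑ i, fderiv ℝ (f i) x) x :=
    HasFDerivAt.fun_sum (fun i _ => (hd i).hasFDerivAt)
  have hFd : HasFDerivAt F ((N : ℝ)⁻¹ • ∑ i, fderiv ℝ (f i) x) x := by
    rw [hF]; exact hsum.const_mul _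
  have : fderiv ℝ F x = (N : ℝ)⁻¹ • ∑ i, fderiv ℝ (f i) x := hFd.fderiv
  simp [gradient, this, map_smul, map_sum]


set_option maxHeartbeats 1000000 in
/-- bound of the SUCAG gradient-approximation error `e^k` in terms of
distances to the optimum, and its consequence under the delay assumption (A4). -/
theorem sucag_error_bound_two
    (d N : ℕ) (hd : 1 ≤ d) (hN : 1 ≤ N)
    -- the component functions and Assumption A1
    (f : Fin N → EuclideanSpace ℝ (Fin d) → ℝ)
    (hconv : ∀ i, ConvexOn ℝ Set.univ (f i))
    (hsmooth : ∀ i, ContDiff ℝ 2 (f i))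
    (LH : Fin N → ℝ) (hLHpos : ∀ i, 0 < LH i)
    (hLH : ∀ i x y, ‖fderiv ℝ (gradient (f i)) x - fderiv ℝ (gradient (f i)) y‖
      ≤ LH i * ‖x - y‖)
    (LbarH : ℝ) (hLbarH : IsGreatest (Set.range LH) LbarH)
    -- the sum function, Assumptions A2 and A3
    (F : EuclideanSpace ℝ (Fin d) → ℝ)
    (hF : F = fun x => (N : ℝ)⁻¹ * ∑ i, f i x)
    (L μ : ℝ) (hL : 0 < L) (hμ : 0 < μ)
    (hFLip : ∀ x y, ‖gradient F x - gradient F y‖ ≤ L * ‖x - y‖)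
    (hstr : ∀ x y : EuclideanSpace ℝ (Fin d),
      F x + ⟪gradient F x, y - x⟫ + μ / 2 * ‖y - x‖ ^ 2 ≤ F y)
    (θstar : EuclideanSpace ℝ (Fin d)) (hmin : ∀ x, F θstar ≤ F x)
    -- the SUCAG iterates
    (γ : ℝ) (hγ : 0 < γ)
    (idx : ℕ → Fin N)
    (τ : ℕ → Fin N → ℕ) (hτ : ∀ k, 1 ≤ k → ∀ i, τ k i < k)
    (θ : ℕ → EuclideanSpace ℝ (Fin d))
    (gA : Fin N → ℕ → EuclideanSpace ℝ (Fin d) → EuclideanSpace ℝ (Fin d))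
    (hgA : ∀ i k x, gA i k x = gradient (f i) (θ (τ k i))
      + (fderiv ℝ (gradient (f i)) (θ (τ k i))) (x - θ (τ k i)))
    (g : ℕ → EuclideanSpace ℝ (Fin d))
    (hg : ∀ k, g k = (gradient (f (idx k)) (θ k) - gA (idx k) k (θ k))
      + (N : ℝ)⁻¹ • ∑ i, gA i k (θ k))
    (hrec : ∀ k, 1 ≤ k → θ (k + 1) = θ k - γ • g k)
    -- the gradient-approximation error
    (e : ℕ → EuclideanSpace ℝ (Fin d))
    (he : ∀ k, e k = g k - gradient F (θ k)) :
    -- first bound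
    (∀ k, 1 ≤ k →
      ‖e k‖ ≤ LbarH * (2 * ‖θ k - θstar‖ ^ 2 + ‖θ (τ k (idx k)) - θstar‖ ^ 2
        + (N : ℝ)⁻¹ * ∑ i ∈ Finset.univ.erase (idx k), ‖θ (τ k i) - θstar‖ ^ 2))
    ∧
    -- second bound, under the delay assumption (A4)
    (∀ m : ℕ → ℝ, ∀ hm1 : 1 ≤ m 1, ∀ hmono : (∀ j l : ℕ, 1 ≤ j → j ≤ l → m j ≤ m l),
      (∀ k : ℕ, 1 ≤ k → ∀ i, (k : ℝ) - (τ k i : ℝ) ≤ m k) →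
      ∀ k : ℕ, ∀ hk : 1 ≤ k,
        ‖e k‖ ≤ 4 * LbarH *
          (Finset.Icc (⌈(k : ℝ) - m k⌉₊) k).sup'
            (by
              refine Finset.nonempty_Icc.mpr (Nat.ceil_le.mpr ?_)
              have h1 : (1 : ℝ) ≤ m k := le_trans hm1 (hmono 1 k le_rfl hk)
              have h2 : (0 : ℝ) ≤ k := Nat.cast_nonneg k
              linarith)
            (fun ℓ => ‖θ ℓ - θstar‖ ^ 2)) := by
  
  have hNpos : (0:ℝ) < N := by exact_mod_cast hN
  have hNinv : (0:ℝ) < (N:ℝ)⁻¹ := inv_pos.mpr hNpos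
  have hN1 : (1:ℝ) ≤ N := by exact_mod_cast hN
  have hNinv1 : (N:ℝ)⁻¹ ≤ 1 := by
    nlinarith [inv_mul_cancel₀ hNpos.ne', hNinv.le]
  have hLbnn : 0 ≤ LbarH := by
    obtain ⟨⟨i0, hi0⟩, -⟩ := hLbarH
    exact hi0 ▸ (hLHpos i0).le
  have hLbge : ∀ i, LH i ≤ LbarH := fun i => hLbarH.2 ⟨i, rfl⟩
  have hGdiff : ∀ i, Differentiable ℝ (gradient (f i)) :=
    fun i => grad_contDiff_one (f i) (hsmooth i)
  have hcard : ∀ k : ℕ, (N:ℝ)⁻¹ * (((Finset.univ.erase (idx k)).card : ℕ) : ℝ) ≤ 1 := by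
    intro k
    have h1 : (((Finset.univ.erase (idx k)).card : ℕ) : ℝ) ≤ (N:ℝ) := by
      exact_mod_cast (Finset.card_le_univ _).trans_eq (Fintype.card_fin N)
    calc (N:ℝ)⁻¹ * (((Finset.univ.erase (idx k)).card : ℕ) : ℝ) ≤ (N:ℝ)⁻¹ * N :=
          mul_le_mul_of_nonneg_left h1 hNinv.le
      _ = 1 := inv_mul_cancel₀ hNpos.ne'
  have key : ∀ k, 1 ≤ k →
      ‖e k‖ ≤ LbarH * (2 * ‖θ k - θstar‖ ^ 2 + ‖θ (τ k (idx k)) - θstar‖ ^ 2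
        + (N : ℝ)⁻¹ * ∑ i ∈ Finset.univ.erase (idx k), ‖θ (τ k i) - θstar‖ ^ 2) := by
    intro k hk
    have ha : (0:ℝ) ≤ ‖θ k - θstar‖ ^ 2 := sq_nonneg _
    set r : Fin N → EuclideanSpace ℝ (Fin d) :=
      fun i => gradient (f i) (θ k) - gA i k (θ k) with hrdef
    have hrb : ∀ i, ‖r i‖ ≤ LbarH * (‖θ k - θstar‖ ^ 2 + ‖θ (τ k i) - θstar‖ ^ 2) := by
      intro i
      have hre : r i = gradient (f i) (θ k) - gradient (f i) (θ (τ k i))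
          - (fderiv ℝ (gradient (f i)) (θ (τ k i))) (θ k - θ (τ k i)) := by
        rw [hrdef]
        simp [hgA, sub_add_eq_sub_sub]
      have ht := taylor_grad_bound (gradient (f i)) (LH i) (hLHpos i).le (hGdiff i)
        (hLH i) (θ k) (θ (τ k i))
      rw [hre]
      refine ht.trans ?_
      have hb : (0:ℝ) ≤ ‖θ (τ k i) - θstar‖ ^ 2 := sq_nonneg _
      have hsq : ‖θ k - θ (τ k i)‖ ^ 2
          ≤ 2 * ‖θ k - θstar‖ ^ 2 + 2 * ‖θ (τ k i) - θstar‖ ^ 2 := by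
        have h1 : ‖θ k - θ (τ k i)‖ ≤ ‖θ k - θstar‖ + ‖θ (τ k i) - θstar‖ := by
          have h2 : θ k - θ (τ k i) = (θ k - θstar) - (θ (τ k i) - θstar) := by abel
          rw [h2]; exact norm_sub_le _ _
        nlinarith [mul_self_le_mul_self (norm_nonneg (θ k - θ (τ k i))) h1,
          sq_nonneg (‖θ k - θstar‖ - ‖θ (τ k i) - θstar‖)]
      nlinarith [mul_nonneg (sub_nonneg.mpr (hLbge i))
          (by positivity : (0:ℝ) ≤ ‖θ k - θstar‖ ^ 2 + ‖θ (τ k i) - θstar‖ ^ 2),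
        mul_nonneg (hLHpos i).le (sub_nonneg.mpr hsq)]
    have hgradF := grad_avg f hsmooth F hF (θ k)
    have hgAi : ∀ i, gA i k (θ k) = gradient (f i) (θ k) - r i := by
      intro i; rw [hrdef]; simp
    have hek : e k = (1 - (N:ℝ)⁻¹) • r (idx k)
        - (N:ℝ)⁻¹ • ∑ i ∈ Finset.univ.erase (idx k), r i := by
      rw [he, hg, hgradF]
      simp only [hgAi]
      rw [Finset.sum_sub_distrib, ← Finset.add_sum_erase _ r (Finset.mem_univ (idx k))]
      module
    have hnorm : ‖e k‖ ≤ ‖r (idx k)‖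
        + (N:ℝ)⁻¹ * ∑ i ∈ Finset.univ.erase (idx k), ‖r i‖ := by
      rw [hek]
      refine (norm_sub_le _ _).trans ?_
      have h1 : ‖(1 - (N:ℝ)⁻¹) • r (idx k)‖ ≤ ‖r (idx k)‖ := by
        rw [norm_smul, Real.norm_eq_abs, abs_of_nonneg (by linarith)]
        nlinarith [norm_nonneg (r (idx k)), hNinv.le]
      have h2 : ‖(N:ℝ)⁻¹ • ∑ i ∈ Finset.univ.erase (idx k), r i‖
          ≤ (N:ℝ)⁻¹ * ∑ i ∈ Finset.univ.erase (idx k), ‖r i‖ := by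
        rw [norm_smul, Real.norm_eq_abs, abs_of_nonneg hNinv.le]
        exact mul_le_mul_of_nonneg_left (norm_sum_le _ _) hNinv.le
      linarith
    have hsumb : ∑ i ∈ Finset.univ.erase (idx k), ‖r i‖
        ≤ (((Finset.univ.erase (idx k)).card : ℕ) : ℝ) * (LbarH * ‖θ k - θstar‖ ^ 2)
          + LbarH * ∑ i ∈ Finset.univ.erase (idx k), ‖θ (τ k i) - θstar‖ ^ 2 := by
      calc ∑ i ∈ Finset.univ.erase (idx k), ‖r i‖
          ≤ ∑ i ∈ Finset.univ.erase (idx k),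
              (LbarH * ‖θ k - θstar‖ ^ 2 + LbarH * ‖θ (τ k i) - θstar‖ ^ 2) :=
            Finset.sum_le_sum (fun i _ => (hrb i).trans_eq (by ring))
        _ = _ := by
            rw [Finset.sum_add_distrib, Finset.sum_const, ← Finset.mul_sum, nsmul_eq_mul]
    have hS0 : (0:ℝ) ≤ ∑ i ∈ Finset.univ.erase (idx k), ‖θ (τ k i) - θstar‖ ^ 2 :=
      Finset.sum_nonneg (fun i _ => sq_nonneg _)
    have hcrd := hcard k
    calc ‖e k‖ ≤ ‖r (idx k)‖ + (N:ℝ)⁻¹ * ∑ i ∈ Finset.univ.erase (idx k), ‖r i‖ := hnorm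
      _ ≤ LbarH * (‖θ k - θstar‖ ^ 2 + ‖θ (τ k (idx k)) - θstar‖ ^ 2)
          + (N:ℝ)⁻¹ * ((((Finset.univ.erase (idx k)).card : ℕ) : ℝ)
              * (LbarH * ‖θ k - θstar‖ ^ 2)
            + LbarH * ∑ i ∈ Finset.univ.erase (idx k), ‖θ (τ k i) - θstar‖ ^ 2) :=
          add_le_add (hrb (idx k)) (mul_le_mul_of_nonneg_left hsumb hNinv.le)
      _ ≤ LbarH * (2 * ‖θ k - θstar‖ ^ 2 + ‖θ (τ k (idx k)) - θstar‖ ^ 2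
          + (N:ℝ)⁻¹ * ∑ i ∈ Finset.univ.erase (idx k), ‖θ (τ k i) - θstar‖ ^ 2) := by
          have hx : (N:ℝ)⁻¹ * ((((Finset.univ.erase (idx k)).card : ℕ) : ℝ)
              * (LbarH * ‖θ k - θstar‖ ^ 2)) ≤ LbarH * ‖θ k - θstar‖ ^ 2 := by
            nlinarith [mul_nonneg hLbnn ha, hcrd]
          nlinarith [hx]
  refine ⟨key, ?_⟩
  intro m hm1 hmono hA4 k hk
  have hmk1 : (1:ℝ) ≤ m k := le_trans hm1 (hmono 1 k le_rfl hk)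
  have hk0 : (0:ℝ) ≤ (k:ℝ) := Nat.cast_nonneg k
  have hne : (Finset.Icc (⌈(k : ℝ) - m k⌉₊) k).Nonempty :=
    Finset.nonempty_Icc.mpr (Nat.ceil_le.mpr (by linarith))
  set M := (Finset.Icc (⌈(k : ℝ) - m k⌉₊) k).sup' hne (fun ℓ => ‖θ ℓ - θstar‖ ^ 2) with hMdef
  show ‖e k‖ ≤ 4 * LbarH * M
  have hmem : ∀ ℓ, ℓ ∈ Finset.Icc (⌈(k : ℝ) - m k⌉₊) k → ‖θ ℓ - θstar‖ ^ 2 ≤ M := by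
    intro ℓ h
    rw [hMdef]
    exact Finset.le_sup' (fun ℓ => ‖θ ℓ - θstar‖ ^ 2) h
  have hak : ‖θ k - θstar‖ ^ 2 ≤ M :=
    hmem k (Finset.mem_Icc.mpr ⟨Nat.ceil_le.mpr (by linarith), le_rfl⟩)
  have hτmem : ∀ i, τ k i ∈ Finset.Icc (⌈(k : ℝ) - m k⌉₊) k := by
    intro i
    refine Finset.mem_Icc.mpr ⟨Nat.ceil_le.mpr ?_, (hτ k hk i).le⟩
    have := hA4 k hk i
    linarith
  have hM0 : (0:ℝ) ≤ M := le_trans (sq_nonneg _) hak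
  have hbk : ‖θ (τ k (idx k)) - θstar‖ ^ 2 ≤ M := hmem _ (hτmem _)
  have hS : ∑ i ∈ Finset.univ.erase (idx k), ‖θ (τ k i) - θstar‖ ^ 2
      ≤ (((Finset.univ.erase (idx k)).card : ℕ) : ℝ) * M := by
    calc ∑ i ∈ Finset.univ.erase (idx k), ‖θ (τ k i) - θstar‖ ^ 2
        ≤ ∑ _i ∈ Finset.univ.erase (idx k), M :=
          Finset.sum_le_sum (fun i _ => hmem _ (hτmem i))
      _ = _ := by rw [Finset.sum_const, nsmul_eq_mul]
  have hc := hcard k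
  have hu : (N:ℝ)⁻¹ * ∑ i ∈ Finset.univ.erase (idx k), ‖θ (τ k i) - θstar‖ ^ 2 ≤ M := by
    have h1 := mul_le_mul_of_nonneg_left hS hNinv.le
    nlinarith [hc, hM0]
  have hfin : 2 * ‖θ k - θstar‖ ^ 2 + ‖θ (τ k (idx k)) - θstar‖ ^ 2
      + (N:ℝ)⁻¹ * ∑ i ∈ Finset.univ.erase (idx k), ‖θ (τ k i) - θstar‖ ^ 2 ≤ 4 * M := by
    linarith
  calc ‖e k‖ ≤ LbarH * (2 * ‖θ k - θstar‖ ^ 2 + ‖θ (τ k (idx k)) - θstar‖ ^ 2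
      + (N:ℝ)⁻¹ * ∑ i ∈ Finset.univ.erase (idx k), ‖θ (τ k i) - θstar‖ ^ 2) := key k hk
    _ ≤ LbarH * (4 * M) := mul_le_mul_of_nonneg_left hfin hLbnn
    _ = 4 * LbarH * M := by ring
end

section
/- (Lemma on nonlinear delayed recursions, part i.) Let R : ℕ → ℝ be nonnegative with R(0) > 0, let p ∈ (0,1), J ≥ 1, and for j = 1,…,J let η_j > 1, q_j ≥ 0, and let m₁ⱼ^(k) ≥ 1 and m₂ⱼ^(k) ≥ 0 be given for each k ≥ 0. Assume R(k+1) ≤ p R(k) + ∑_{j=1}^J q_j m₁ⱼ^(k) max_{(k − m₂ⱼ^(k))_+ ≤ ℓ ≤ k} R(ℓ)^{η_j} for all k ≥ 0, where the max is over integers ℓ. Fix δ ∈ (p, 1), define ξ_j*(δ) := inf_{k ≥ 0} ( log(m₁ⱼ^(k))/log δ + η_j (k − m₂ⱼ^(k))_+ − k ), and assume ξ_j*(δ) > −∞ and q_j ≤ (1/R(0)^{η_j − 1}) · δ^{−ξ_j*(δ)} (δ − p)/J for every j. Then R(k) ≤ δ^k R(0) for all k ≥ 0. -/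
open scoped BigOperators

/-- lemma on nonlinear delayed recursions, part (i): linear
convergence `R(k) ≤ δ^k R(0)`. Real powers (`rpow`) are used for the
exponents `η_j` and `−ξ_j*(δ)`. -/
theorem nonlinear_delayed_recursion_linear_convergence
    (J : ℕ) (hJ : 1 ≤ J)
    (R : ℕ → ℝ) (hRnonneg : ∀ k, 0 ≤ R k) (hR0 : 0 < R 0)
    (p : ℝ) (hp0 : 0 < p) (hp1 : p < 1)
    (η q : Fin J → ℝ) (hη : ∀ j, 1 < η j) (hq0 : ∀ j, 0 ≤ q j)
    (m₁ m₂ : Fin J → ℕ → ℝ)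
    (hm₁ : ∀ j k, 1 ≤ m₁ j k) (hm₂ : ∀ j k, 0 ≤ m₂ j k)
    (hrec : ∀ k : ℕ, R (k + 1) ≤ p * R k + ∑ j, q j * m₁ j k *
      (Finset.Icc (⌈(k : ℝ) - m₂ j k⌉₊) k).sup'
        (by
          refine Finset.nonempty_Icc.mpr (Nat.ceil_le.mpr ?_)
          have := hm₂ j k
          linarith)
        (fun ℓ => R ℓ ^ (η j)))
    (δ : ℝ) (hδp : p < δ) (hδ1 : δ < 1)
    (hbdd : ∀ j, BddBelow (Set.range fun k : ℕ =>
      Real.log (m₁ j k) / Real.log δ + η j * max ((k : ℝ) - m₂ j k) 0 - (k : ℝ)))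
    (hq : ∀ j, q j ≤ (1 / R 0 ^ (η j - 1)) *
      δ ^ (-(⨅ k : ℕ, (Real.log (m₁ j k) / Real.log δ
        + η j * max ((k : ℝ) - m₂ j k) 0 - (k : ℝ)))) * (δ - p) / (J : ℝ)) :
    ∀ k, R k ≤ δ ^ k * R 0 := by
  have hδ0 : (0:ℝ) < δ := lt_trans hp0 hδp
  have hJ0 : ((J:ℝ)) ≠ 0 := by positivity
  intro k
  induction k using Nat.strong_induction_on with
  | _ k IH =>
    match k with
    | 0 => simp
    | (n+1) =>
      have hne : ∀ j : Fin J, (Finset.Icc (⌈(n : ℝ) - m₂ j n⌉₊) n).Nonempty := by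
        intro j
        refine Finset.nonempty_Icc.mpr (Nat.ceil_le.mpr ?_)
        have := hm₂ j n
        linarith
      have key : ∀ j : Fin J, q j * m₁ j n *
          (Finset.Icc (⌈(n : ℝ) - m₂ j n⌉₊) n).sup' (hne j) (fun ℓ => R ℓ ^ (η j))
            ≤ (δ - p) / J * (δ ^ n * R 0) := by
        intro j
        have hηpos : (0:ℝ) < η j := lt_trans one_pos (hη j)
        have hm₁pos : (0:ℝ) < m₁ j n := lt_of_lt_of_le one_pos (hm₁ j n)
        set x := max ((n:ℝ) - m₂ j n) 0 with hxdef
        set L := Real.log (m₁ j n) / Real.log δ with hLdef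
        set ξ := ⨅ k : ℕ, (Real.log (m₁ j k) / Real.log δ
          + η j * max ((k:ℝ) - m₂ j k) 0 - (k:ℝ)) with hξdef
        have hξle : ξ ≤ L + η j * x - n := ciInf_le (hbdd j) n
        have hlogδ : Real.log δ ≠ 0 := by
          have := Real.log_neg hδ0 hδ1; linarith
        have hm₁eq : m₁ j n = δ ^ L := by
          rw [hLdef, Real.rpow_def_of_pos hδ0, mul_comm,
            div_mul_cancel₀ _ hlogδ, Real.exp_log hm₁pos]
        -- bound the sup'
        have hsup : (Finset.Icc (⌈(n : ℝ) - m₂ j n⌉₊) n).sup' (hne j)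
            (fun ℓ => R ℓ ^ (η j)) ≤ δ ^ (η j * x) * R 0 ^ (η j) := by
          apply Finset.sup'_le
          intro ℓ hℓ
          obtain ⟨hℓ1, hℓ2⟩ := Finset.mem_Icc.mp hℓ
          have h1 : R ℓ ≤ δ ^ ℓ * R 0 := IH ℓ (Nat.lt_succ_of_le hℓ2)
          have h2 : R ℓ ^ (η j) ≤ (δ ^ ℓ * R 0) ^ (η j) :=
            Real.rpow_le_rpow (hRnonneg ℓ) h1 hηpos.le
          have h3 : (δ ^ ℓ * R 0) ^ (η j) = δ ^ ((ℓ:ℝ) * η j) * R 0 ^ (η j) := by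
            rw [Real.mul_rpow (by positivity) hR0.le, ← Real.rpow_natCast δ ℓ,
              ← Real.rpow_mul hδ0.le]
          have hxle : x ≤ (ℓ:ℝ) := by
            have hceil : ((n:ℝ) - m₂ j n) ≤ (⌈(n : ℝ) - m₂ j n⌉₊ : ℝ) := Nat.le_ceil _
            have : ((⌈(n : ℝ) - m₂ j n⌉₊ : ℕ):ℝ) ≤ (ℓ:ℝ) := Nat.cast_le.mpr hℓ1
            simp only [hxdef, max_le_iff]
            constructor <;> [linarith; positivity]
          have h4 : δ ^ ((ℓ:ℝ) * η j) ≤ δ ^ (η j * x) := by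
            apply Real.rpow_le_rpow_of_exponent_ge hδ0 hδ1.le
            nlinarith
          calc R ℓ ^ (η j) ≤ δ ^ ((ℓ:ℝ) * η j) * R 0 ^ (η j) := by rw [← h3]; exact h2
            _ ≤ δ ^ (η j * x) * R 0 ^ (η j) := by
                apply mul_le_mul_of_nonneg_right h4 (by positivity)
        have e1 : q j * m₁ j n *
            ((Finset.Icc (⌈(n : ℝ) - m₂ j n⌉₊) n).sup' (hne j) (fun ℓ => R ℓ ^ (η j)))
            ≤ q j * m₁ j n * (δ ^ (η j * x) * R 0 ^ (η j)) := by
          exact mul_le_mul_of_nonneg_left hsup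
            (mul_nonneg (hq0 j) hm₁pos.le)
        have e2 : q j * m₁ j n * (δ ^ (η j * x) * R 0 ^ (η j))
            = q j * (δ ^ (L + η j * x) * R 0 ^ (η j)) := by
          rw [hm₁eq, Real.rpow_add hδ0]; ring
        have e3 : q j * (δ ^ (L + η j * x) * R 0 ^ (η j))
            ≤ ((1 / R 0 ^ (η j - 1)) * δ ^ (-ξ) * (δ - p) / J)
              * (δ ^ (L + η j * x) * R 0 ^ (η j)) := by
          apply mul_le_mul_of_nonneg_right (hq j) (by positivity)
        have e4 : ((1 / R 0 ^ (η j - 1)) * δ ^ (-ξ) * (δ - p) / J)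
            * (δ ^ (L + η j * x) * R 0 ^ (η j))
            = (δ - p) / J * (δ ^ (L + η j * x - ξ) * R 0) := by
          have hR0eq : R 0 ^ (η j) / R 0 ^ (η j - 1) = R 0 := by
            rw [← Real.rpow_sub hR0, show η j - (η j - 1) = 1 by ring, Real.rpow_one]
          have hδeq : δ ^ (-ξ) * δ ^ (L + η j * x) = δ ^ (L + η j * x - ξ) := by
            rw [← Real.rpow_add hδ0]; congr 1; ring
          have hre : (1 / R 0 ^ (η j - 1)) * δ ^ (-ξ) * (δ - p) / J
              * (δ ^ (L + η j * x) * R 0 ^ (η j))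
              = (δ - p) / J * ((δ ^ (-ξ) * δ ^ (L + η j * x))
                * (R 0 ^ (η j) / R 0 ^ (η j - 1))) := by ring
          rw [hre, hδeq, hR0eq]
        have e5 : δ ^ (L + η j * x - ξ) ≤ δ ^ n := by
          rw [← Real.rpow_natCast δ n]
          apply Real.rpow_le_rpow_of_exponent_ge hδ0 hδ1.le
          linarith
        have hδp' : (0:ℝ) ≤ (δ - p) / J := by
          apply div_nonneg (by linarith) (by positivity)
        calc q j * m₁ j n *
            ((Finset.Icc (⌈(n : ℝ) - m₂ j n⌉₊) n).sup' (hne j) (fun ℓ => R ℓ ^ (η j)))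
            ≤ (δ - p) / J * (δ ^ (L + η j * x - ξ) * R 0) := by
              rw [← e4]; exact le_trans e1 (e2 ▸ e3)
          _ ≤ (δ - p) / J * (δ ^ n * R 0) :=
              mul_le_mul_of_nonneg_left
                (mul_le_mul_of_nonneg_right e5 hR0.le) hδp'
      have hsum : ∑ j : Fin J, q j * m₁ j n *
          (Finset.Icc (⌈(n : ℝ) - m₂ j n⌉₊) n).sup' (hne j) (fun ℓ => R ℓ ^ (η j))
          ≤ (δ - p) * (δ ^ n * R 0) := by
        calc ∑ j : Fin J, q j * m₁ j n *
            (Finset.Icc (⌈(n : ℝ) - m₂ j n⌉₊) n).sup' (hne j) (fun ℓ => R ℓ ^ (η j))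
            ≤ ∑ _j : Fin J, (δ - p) / J * (δ ^ n * R 0) :=
              Finset.sum_le_sum (fun j _ => key j)
          _ = (δ - p) * (δ ^ n * R 0) := by
              rw [Finset.sum_const, Finset.card_univ, Fintype.card_fin, nsmul_eq_mul]
              field_simp
      have hRn : R n ≤ δ ^ n * R 0 := IH n (Nat.lt_succ_self n)
      have := hrec n
      have hfinal : R (n+1) ≤ p * (δ ^ n * R 0) + (δ - p) * (δ ^ n * R 0) := by
        refine le_trans this ?_
        have h1 : p * R n ≤ p * (δ ^ n * R 0) :=
          mul_le_mul_of_nonneg_left hRn hp0.le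
        linarith [hsum]
      calc R (n+1) ≤ p * (δ ^ n * R 0) + (δ - p) * (δ ^ n * R 0) := hfinal
        _ = δ ^ (n+1) * R 0 := by ring
end

section
/- (Lemma on nonlinear delayed recursions, part ii.) Let R : ℕ → ℝ be nonnegative with R(0) > 0, let p ∈ (0,1), J ≥ 1, and for j = 1,…,J let η_j > 1, q_j ≥ 0, and let m₁ⱼ^(k) ≥ 1 and m₂ⱼ^(k) ≥ 0 be given for each k ≥ 0, with R(k+1) ≤ p R(k) + ∑_{j=1}^J q_j m₁ⱼ^(k) max_{(k − m₂ⱼ^(k))_+ ≤ ℓ ≤ k} R(ℓ)^{η_j} for all k ≥ 0. Set η := min_j η_j > 1 and fix δ ∈ (p, 1). Assume the growth conditions: there exist c₀, c₁, m₀ ≥ 1 and β ∈ (0, (η−1)/η) such that for all j and all k ≥ 1, log(m₁ⱼ^(k)) ≤ c₀ + c₁ log k, log(m₁ⱼ^(0)) ≤ c₀, and m₂ⱼ^(k) ≤ m₀ + ((η−1)/η − β) k for all k ≥ 0. Assume also q_j ≤ (1/R(0)^{η_j − 1}) · δ^{−ξ_j*(δ)} (δ − p)/J for every j, where ξ_j*(δ)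 := inf_{k ≥ 0} ( log(m₁ⱼ^(k))/log δ + η_j (k − m₂ⱼ^(k))_+ − k ). Then there exists a sequence R̄ : ℕ → ℝ with R̄(k) ≥ R(k) for all k ≥ 0 and lim_{k→∞} R̄(k+1)/R̄(k) = p. -/
open scoped BigOperators
open Filter

lemma aux_rpow_mul_geom_tendsto (c r : ℝ) (h0 : 0 ≤ r) (h1 : r < 1) :
    Tendsto (fun k : ℕ => (k : ℝ) ^ c * r ^ k) atTop (nhds 0) := by
  have hmain := tendsto_pow_const_mul_const_pow_of_lt_one ⌈c⌉₊ h0 h1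
  refine tendsto_of_tendsto_of_tendsto_of_le_of_le' tendsto_const_nhds hmain ?_ ?_
  · filter_upwards [eventually_ge_atTop 1] with k hk
    positivity
  · filter_upwards [eventually_ge_atTop 1] with k hk
    have hk1 : (1 : ℝ) ≤ (k : ℝ) := by exact_mod_cast hk
    have h : (k : ℝ) ^ c ≤ (k : ℝ) ^ (⌈c⌉₊ : ℝ) :=
      Real.rpow_le_rpow_of_exponent_le hk1 (Nat.le_ceil c)
    rw [Real.rpow_natCast] at h
    have hr : (0:ℝ) ≤ r ^ k := by positivity
    exact mul_le_mul_of_nonneg_right h hr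

lemma aux_lin_rec (S N : ℕ → ℝ) (p C μ : ℝ) (hp : 0 ≤ p) (hpμ : p < μ)
    (hC : 0 ≤ C) (K : ℕ) (hS : ∀ k, S (k + 1) ≤ p * S k + N k)
    (hN : ∀ k, K ≤ k → N k ≤ C * μ ^ k) :
    ∃ A, 0 < A ∧ ∀ k, S k ≤ A * μ ^ k := by
  have hμ : 0 < μ := lt_of_le_of_lt hp hpμ
  have hμp : 0 < μ - p := by linarith
  set I := (Finset.range (K + 1)).sup' (by simp) (fun k => S k / μ ^ k) with hI
  set A := max I (C / (μ - p)) + 1 with hA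
  clear_value I A
  have hCA : C / (μ - p) ≤ A := by
    have h2 : C / (μ - p) ≤ max I (C / (μ - p)) := le_sup_right; linarith
  have hA0 : 0 < A := by
    have h1 : (0:ℝ) ≤ C / (μ - p) := by positivity
    have h2 : C / (μ - p) ≤ max I (C / (μ - p)) := le_sup_right
    linarith
  have hbase : ∀ k, k ≤ K → S k ≤ A * μ ^ k := by
    intro k hk
    have hIk : S k / μ ^ k ≤ I := by
      rw [hI]
      exact Finset.le_sup' (fun k => S k / μ ^ k) (Finset.mem_range.mpr (by omega))
    have hμk : (0:ℝ) < μ ^ k := by positivity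
    have : S k / μ ^ k ≤ A := by
      have h3 : I ≤ max I (C / (μ - p)) := le_sup_left; linarith
    calc S k = S k / μ ^ k * μ ^ k := by field_simp
    _ ≤ A * μ ^ k := mul_le_mul_of_nonneg_right this hμk.le
  refine ⟨A, hA0, ?_⟩
  intro k
  induction k with
  | zero => exact hbase 0 (Nat.zero_le K)
  | succ m ih =>
    by_cases hm : m + 1 ≤ K
    · exact hbase (m + 1) hm
    · have hKm : K ≤ m := by omega
      have hμm : (0:ℝ) < μ ^ m := by positivity
      calc S (m + 1) ≤ p * S m + N m := hS m
      _ ≤ p * (A * μ ^ m) + C * μ ^ m := by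
          have h1 := mul_le_mul_of_nonneg_left ih hp
          have h2 := hN m hKm
          linarith
      _ ≤ p * (A * μ ^ m) + A * (μ - p) * μ ^ m := by
          have hC' : C ≤ A * (μ - p) := by
            rw [div_le_iff₀ hμp] at hCA; linarith
          nlinarith [mul_le_mul_of_nonneg_right hC' hμm.le]
      _ = A * μ ^ (m + 1) := by ring

lemma aux_quad (t c B : ℝ) (hB : 0 < B) : 0 ≤ B*t^2 - 2*c*t + c^2/B := by
  have h : (B*t^2 - 2*c*t + c^2/B)*B = (B*t-c)^2 := by field_simp; ring
  nlinarith [sq_nonneg (B*t-c)]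

set_option maxHeartbeats 2000000

/-- lemma on nonlinear delayed recursions, part (ii): existence of
an upper bound sequence `R̄` whose ratio `R̄(k+1)/R̄(k)` converges to `p`. -/
theorem nonlinear_delayed_recursion_asymptotic_rate
    (J : ℕ) (hJ : 1 ≤ J)
    (R : ℕ → ℝ) (hRnonneg : ∀ k, 0 ≤ R k) (hR0 : 0 < R 0)
    (p : ℝ) (hp0 : 0 < p) (hp1 : p < 1)
    (η q : Fin J → ℝ) (hη : ∀ j, 1 < η j) (hq0 : ∀ j, 0 ≤ q j)
    (m₁ m₂ : Fin J → ℕ → ℝ)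
    (hm₁ : ∀ j k, 1 ≤ m₁ j k) (hm₂ : ∀ j k, 0 ≤ m₂ j k)
    (hrec : ∀ k : ℕ, R (k + 1) ≤ p * R k + ∑ j, q j * m₁ j k *
      (Finset.Icc (⌈(k : ℝ) - m₂ j k⌉₊) k).sup'
        (by
          refine Finset.nonempty_Icc.mpr (Nat.ceil_le.mpr ?_)
          have := hm₂ j k
          linarith)
        (fun ℓ => R ℓ ^ (η j)))
    -- η is the smallest of the exponents η_j
    (ηmin : ℝ) (hηmin : IsLeast (Set.range η) ηmin)
    (δ : ℝ) (hδp : p < δ) (hδ1 : δ < 1)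
    -- growth conditions on m₁ and m₂
    (c₀ c₁ m₀ β : ℝ) (hc₀ : 1 ≤ c₀) (hc₁ : 1 ≤ c₁) (hm₀ : 1 ≤ m₀)
    (hβ0 : 0 < β) (hβ : β < (ηmin - 1) / ηmin)
    (hgrowth₁ : ∀ j, ∀ k : ℕ, 1 ≤ k → Real.log (m₁ j k) ≤ c₀ + c₁ * Real.log k)
    (hgrowth₀ : ∀ j, Real.log (m₁ j 0) ≤ c₀)
    (hgrowth₂ : ∀ j, ∀ k : ℕ, m₂ j k ≤ m₀ + ((ηmin - 1) / ηmin - β) * k)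
    -- step-size-type condition on the q_j
    (hq : ∀ j, q j ≤ (1 / R 0 ^ (η j - 1)) *
      δ ^ (-(⨅ k : ℕ, (Real.log (m₁ j k) / Real.log δ
        + η j * max ((k : ℝ) - m₂ j k) 0 - (k : ℝ)))) * (δ - p) / (J : ℝ)) :
    ∃ Rbar : ℕ → ℝ, (∀ k, R k ≤ Rbar k) ∧
      Tendsto (fun k => Rbar (k + 1) / Rbar k) atTop (nhds p) := by
  -- basic facts
  obtain ⟨⟨j₀, hj₀⟩, hlbd⟩ := hηmin
  have hηm1 : 1 < ηmin := hj₀ ▸ hη j₀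
  have hηm0 : 0 < ηmin := by linarith
  have hηmle : ∀ j, ηmin ≤ η j := fun j => hlbd ⟨j, rfl⟩
  have hδ0 : 0 < δ := lt_trans hp0 hδp
  have hJ0 : (0:ℝ) < J := by exact_mod_cast hJ
  have hlogδ : Real.log δ < 0 := Real.log_neg hδ0 hδ1
  have hne : ∀ (j : Fin J) (k : ℕ), (Finset.Icc (⌈(k : ℝ) - m₂ j k⌉₊) k).Nonempty := by
    intro j k
    refine Finset.nonempty_Icc.mpr (Nat.ceil_le.mpr ?_)
    have := hm₂ j k
    push_cast
    linarith
  set N : ℕ → ℝ := fun k => ∑ j, q j * m₁ j k *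
      (Finset.Icc (⌈(k : ℝ) - m₂ j k⌉₊) k).sup' (hne j k) (fun ℓ => R ℓ ^ (η j)) with hNdef
  have hrecN : ∀ k : ℕ, R (k + 1) ≤ p * R k + N k := fun k => hrec k
  set Rbar : ℕ → ℝ := fun k => Nat.rec (R 0) (fun m ih => p * ih + N m) k with hRbardef
  have hRb0 : Rbar 0 = R 0 := rfl
  have hRbS : ∀ k, Rbar (k + 1) = p * Rbar k + N k := fun k => rfl
  clear_value N Rbar
  have hkmem : ∀ (j : Fin J) (k : ℕ), k ∈ Finset.Icc (⌈(k : ℝ) - m₂ j k⌉₊) k :=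
    fun j k => Finset.mem_Icc.mpr ⟨Finset.nonempty_Icc.mp (hne j k), le_refl k⟩
  have hNnn : ∀ k, 0 ≤ N k := by
    intro k
    simp only [hNdef]
    apply Finset.sum_nonneg
    intro j _
    have h1 : (0:ℝ) ≤ R k ^ (η j) := Real.rpow_nonneg (hRnonneg k) _
    have h2 := Finset.le_sup' (fun ℓ => R ℓ ^ (η j)) (hkmem j k)
    have h3 : (0:ℝ) ≤ m₁ j k := le_trans zero_le_one (hm₁ j k)
    exact mul_nonneg (mul_nonneg (hq0 j) h3) (le_trans h1 h2)
  have hRle : ∀ k, R k ≤ Rbar k := by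
    intro k
    induction k with
    | zero => exact le_of_eq hRb0.symm
    | succ m ih =>
      rw [hRbS]
      calc R (m+1) ≤ p * R m + N m := hrecN m
      _ ≤ p * Rbar m + N m := by nlinarith [mul_le_mul_of_nonneg_left ih hp0.le]
  have hRbpos : ∀ k, 0 < Rbar k := by
    intro k
    induction k with
    | zero => exact hRb0 ▸ hR0
    | succ m ih =>
      rw [hRbS]
      nlinarith [hNnn m]
  have hRblow : ∀ k, R 0 * p ^ k ≤ Rbar k := by
    intro k
    induction k with
    | zero => simp [hRb0]
    | succ m ih =>
      rw [hRbS, pow_succ]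
      nlinarith [hNnn m]
  -- lower bound of the infimum
  obtain ⟨L, hL, hLdef⟩ : ∃ L, 0 < L ∧ Real.log δ = -L :=
    ⟨-Real.log δ, by linarith, by ring⟩
  have hwgrow : ∀ (j : Fin J) (k : ℕ), (1/ηmin + β) * k - m₀ ≤ (k:ℝ) - m₂ j k := by
    intro j k
    have h1 := hgrowth₂ j k
    have h2 : (ηmin - 1)/ηmin = 1 - 1/ηmin := by field_simp
    have h3 : (0:ℝ) ≤ (k:ℝ) := Nat.cast_nonneg k
    nlinarith
  have hbdd : ∀ j : Fin J, BddBelow (Set.range fun k : ℕ =>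
      Real.log (m₁ j k) / Real.log δ + η j * max ((k : ℝ) - m₂ j k) 0 - (k : ℝ)) := by
    intro j
    refine ⟨-(c₀/L) - ηmin * m₀ - (c₁/L)^2/(β*ηmin), ?_⟩
    rintro x ⟨k, rfl⟩
    have hm₁0 : (0:ℝ) < m₁ j k := lt_of_lt_of_le one_pos (hm₁ j k)
    have hlognn : 0 ≤ Real.log (m₁ j k) := Real.log_nonneg (hm₁ j k)
    have hmaxnn : (0:ℝ) ≤ max ((k : ℝ) - m₂ j k) 0 := le_max_right _ _
    have hsq1 : (0:ℝ) ≤ (c₁/L)^2/(β*ηmin) := by positivity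
    have hsq2 : (0:ℝ) ≤ ηmin * m₀ := by nlinarith
    rcases Nat.eq_zero_or_pos k with hk0 | hk1
    · subst hk0
      have h1 : -(c₀/L) ≤ Real.log (m₁ j 0) / Real.log δ := by
        rw [hLdef, div_neg]
        have h2 : Real.log (m₁ j 0) / L ≤ c₀ / L :=
          div_le_div_of_nonneg_right (hgrowth₀ j) hL.le
        linarith
      have h2 : 0 ≤ η j * max (((0:ℕ) : ℝ) - m₂ j 0) 0 :=
        mul_nonneg (by linarith [hη j]) hmaxnn
      simp only [Nat.cast_zero] at h2 ⊢
      linarith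
    · have hk1' : (1:ℝ) ≤ (k:ℝ) := by exact_mod_cast hk1
      have hkpos : (0:ℝ) < (k:ℝ) := by linarith
      have h1 : -(c₀/L) - (c₁/L) * Real.log k ≤ Real.log (m₁ j k) / Real.log δ := by
        rw [hLdef, div_neg]
        have h2 : Real.log (m₁ j k) / L ≤ (c₀ + c₁ * Real.log k)/L :=
          div_le_div_of_nonneg_right (hgrowth₁ j k hk1) hL.le
        have h3 : (c₀ + c₁ * Real.log k)/L = c₀/L + (c₁/L) * Real.log k := by ring
        linarith
      have h4 : (k:ℝ) + β*ηmin*k - ηmin*m₀ ≤ η j * max ((k : ℝ) - m₂ j k) 0 := by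
        have h5 : ηmin * max ((k : ℝ) - m₂ j k) 0 ≤ η j * max ((k : ℝ) - m₂ j k) 0 :=
          mul_le_mul_of_nonneg_right (hηmle j) hmaxnn
        have h6 : (k:ℝ) - m₂ j k ≤ max ((k : ℝ) - m₂ j k) 0 := le_max_left _ _
        have h7 : ηmin * ((1/ηmin + β) * k - m₀) = (k:ℝ) + β*ηmin*k - ηmin*m₀ := by
          field_simp
        have h8 : ηmin * ((1/ηmin + β) * k - m₀) ≤ ηmin * max ((k:ℝ) - m₂ j k) 0 :=
          mul_le_mul_of_nonneg_left ((hwgrow j k).trans h6) hηm0.le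
        linarith
      have hs1 : (1:ℝ) ≤ Real.sqrt k := by
        rw [show (1:ℝ) = Real.sqrt 1 by simp]
        exact Real.sqrt_le_sqrt hk1'
      have hlogk : Real.log k ≤ 2 * Real.sqrt k := by
        have := Real.log_le_sub_one_of_pos (show (0:ℝ) < Real.sqrt k by linarith)
        have hls : Real.log (Real.sqrt k) = Real.log k / 2 := Real.log_sqrt hkpos.le
        linarith
      have hsqk : Real.sqrt k ^ 2 = (k:ℝ) := Real.sq_sqrt hkpos.le
      have hcl : (0:ℝ) ≤ c₁/L := by positivity
      have hB : (0:ℝ) < β*ηmin := by positivity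
      have hkey : -((c₁/L)^2/(β*ηmin)) ≤ -(c₁/L) * Real.log k + β*ηmin*k := by
        have h8 : (c₁/L) * Real.log k ≤ (c₁/L) * (2*Real.sqrt k) :=
          mul_le_mul_of_nonneg_left hlogk hcl
        have h11 := aux_quad (Real.sqrt k) (c₁/L) (β*ηmin) hB
        rw [hsqk] at h11
        linarith
      linarith
  have hδp' : 0 < δ - p := by linarith
  -- Part (i): geometric decay at rate δ
  have hPartI : ∀ k, ∀ l, l ≤ k → Rbar l ≤ R 0 * δ ^ l := by
    intro k
    induction k with
    | zero =>
      intro l hl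
      have hl0 : l = 0 := Nat.le_zero.mp hl
      subst hl0
      simp [hRb0]
    | succ k ih =>
      intro l hl
      rcases Nat.lt_or_ge l (k+1) with h | h
      · exact ih l (by omega)
      · have h' : l = k + 1 := by omega
        subst h'
        rw [hRbS]
        have hterm : ∀ j : Fin J, q j * m₁ j k *
            (Finset.Icc (⌈(k : ℝ) - m₂ j k⌉₊) k).sup' (hne j k) (fun ℓ => R ℓ ^ (η j))
            ≤ (δ - p)/J * (R 0 * δ ^ k) := by
          intro j
          have hηj0 : (0:ℝ) ≤ η j := by linarith [hη j]
          have hm₁0 : (0:ℝ) < m₁ j k := lt_of_lt_of_le one_pos (hm₁ j k)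
          have hsupb : (Finset.Icc (⌈(k : ℝ) - m₂ j k⌉₊) k).sup' (hne j k)
              (fun ℓ => R ℓ ^ (η j)) ≤ (R 0 * δ ^ (⌈(k : ℝ) - m₂ j k⌉₊)) ^ (η j) := by
            apply Finset.sup'_le
            intro ℓ hℓ
            obtain ⟨h1, h2⟩ := Finset.mem_Icc.mp hℓ
            have hRl : R ℓ ≤ R 0 * δ ^ ℓ := (hRle ℓ).trans (ih ℓ h2)
            have hmono : R 0 * δ ^ ℓ ≤ R 0 * δ ^ (⌈(k : ℝ) - m₂ j k⌉₊) :=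
              mul_le_mul_of_nonneg_left (pow_le_pow_of_le_one hδ0.le hδ1.le h1) hR0.le
            exact Real.rpow_le_rpow (hRnonneg ℓ) (hRl.trans hmono) hηj0
          have hsplit : ((R 0 * δ ^ (⌈(k : ℝ) - m₂ j k⌉₊) : ℝ)) ^ (η j)
              = R 0 * R 0 ^ (η j - 1) * δ ^ (((⌈(k : ℝ) - m₂ j k⌉₊ : ℕ) : ℝ) * η j) := by
            rw [Real.mul_rpow hR0.le (by positivity), ← Real.rpow_natCast δ (⌈(k : ℝ) - m₂ j k⌉₊),
              ← Real.rpow_mul hδ0.le]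
            congr 1
            rw [show η j = 1 + (η j - 1) by ring, Real.rpow_add hR0, Real.rpow_one]
            ring_nf
          obtain ⟨ξ, hξle, hqj⟩ : ∃ ξ : ℝ, (∀ n : ℕ, ξ ≤ Real.log (m₁ j n) / Real.log δ
              + η j * max ((n : ℝ) - m₂ j n) 0 - (n : ℝ)) ∧
              q j ≤ 1 / R 0 ^ (η j - 1) * δ ^ (-ξ) * (δ - p) / (J:ℝ) :=
            ⟨_, fun n => ciInf_le (hbdd j) n, hq j⟩
          have hinfle := hξle k
          have hkey : δ ^ (-ξ) * (m₁ j k * δ ^ (((⌈(k : ℝ) - m₂ j k⌉₊ : ℕ) : ℝ) * η j))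
              ≤ δ ^ ((k : ℝ)) := by
            have hm₁eq : δ ^ (Real.log (m₁ j k)/Real.log δ) = m₁ j k := by
              rw [Real.rpow_def_of_pos hδ0, mul_comm, div_mul_cancel₀ _ (ne_of_lt hlogδ),
                Real.exp_log hm₁0]
            rw [← hm₁eq, ← Real.rpow_add hδ0, ← Real.rpow_add hδ0]
            apply Real.rpow_le_rpow_of_exponent_ge hδ0 hδ1.le
            have hceil : max ((k : ℝ) - m₂ j k) 0 ≤ ((⌈(k : ℝ) - m₂ j k⌉₊ : ℕ) : ℝ) :=
              max_le (Nat.le_ceil _) (Nat.cast_nonneg _)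
            have hmul := mul_le_mul_of_nonneg_left hceil hηj0
            nlinarith
          have hP : (0:ℝ) < R 0 ^ (η j - 1) := Real.rpow_pos_of_pos hR0 _
          have hsup0 : (0:ℝ) ≤ (R 0 * δ ^ (⌈(k : ℝ) - m₂ j k⌉₊)) ^ (η j) :=
            Real.rpow_nonneg (by positivity) _
          calc q j * m₁ j k * ((Finset.Icc (⌈(k : ℝ) - m₂ j k⌉₊) k).sup' (hne j k)
              (fun ℓ => R ℓ ^ (η j)))
              ≤ q j * m₁ j k * ((R 0 * δ ^ (⌈(k : ℝ) - m₂ j k⌉₊)) ^ (η j)) :=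
                mul_le_mul_of_nonneg_left hsupb (mul_nonneg (hq0 j) hm₁0.le)
            _ = q j * (m₁ j k * ((R 0 * δ ^ (⌈(k : ℝ) - m₂ j k⌉₊)) ^ (η j))) := by ring
            _ ≤ (1 / R 0 ^ (η j - 1) * δ ^ (-ξ) * (δ - p) / J)
                * (m₁ j k * ((R 0 * δ ^ (⌈(k : ℝ) - m₂ j k⌉₊)) ^ (η j))) :=
                mul_le_mul_of_nonneg_right hqj (mul_nonneg hm₁0.le hsup0)
            _ = (δ - p)/J * R 0 * (δ ^ (-ξ) * (m₁ j k
                * δ ^ (((⌈(k : ℝ) - m₂ j k⌉₊ : ℕ) : ℝ) * η j))) := by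
                rw [hsplit]
                field_simp
            _ ≤ (δ - p)/J * R 0 * δ ^ ((k : ℝ)) := by
                apply mul_le_mul_of_nonneg_left hkey
                positivity
            _ = (δ - p)/J * (R 0 * δ ^ k) := by
                rw [← Real.rpow_natCast δ k]
                ring
        have hNk : N k ≤ ∑ _j : Fin J, (δ - p)/J * (R 0 * δ ^ k) := by
          rw [hNdef]
          exact Finset.sum_le_sum fun j _ => hterm j
        have h2 := mul_le_mul_of_nonneg_left (ih k le_rfl) hp0.le
        have hsum : ∑ _j : Fin J, (δ - p)/J * (R 0 * δ ^ k) = (δ - p) * (R 0 * δ ^ k) := by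
          rw [Finset.sum_const, Finset.card_univ, Fintype.card_fin, nsmul_eq_mul]
          field_simp
        rw [hsum] at hNk
        have : p * (R 0 * δ ^ k) + (δ - p) * (R 0 * δ ^ k) = R 0 * δ ^ (k+1) := by ring
        linarith
  have hb1 : 1 < 1 + β * ηmin := by nlinarith
  have hQnn : (0:ℝ) ≤ ∑ j, q j := Finset.sum_nonneg fun j _ => hq0 j
  -- bound on the nonlinear term N under a geometric decay hypothesis
  have hNbound : ∀ γ A : ℝ, 0 < A → 0 < γ → γ < 1 → (∀ k, Rbar k ≤ A * γ ^ k) →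
      ∃ C : ℝ, 0 ≤ C ∧ ∃ K : ℕ, ∀ k, K ≤ k →
        N k ≤ C * (k : ℝ) ^ c₁ * (γ ^ (1 + β * ηmin)) ^ k := by
    intro γ A hA hγ0 hγ1 hbound
    have ha0 : 0 < 1/ηmin + β := by positivity
    have hfact : ∀ k : ℕ, γ ^ ((1/ηmin+β) * (k:ℝ) - m₀)
        = γ ^ (-m₀) * (γ ^ (1/ηmin+β)) ^ k := by
      intro k
      rw [← Real.rpow_natCast (γ ^ (1/ηmin+β)) k, ← Real.rpow_mul hγ0.le,
        ← Real.rpow_add hγ0]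
      congr 1
      ring
    have htend : Tendsto (fun k : ℕ => A * γ ^ ((1/ηmin+β) * (k:ℝ) - m₀)) atTop (nhds 0) := by
      have h1 : γ ^ ((1:ℝ)/ηmin+β) < 1 := Real.rpow_lt_one hγ0.le hγ1 ha0
      have h2 : 0 ≤ γ ^ ((1:ℝ)/ηmin+β) := Real.rpow_nonneg hγ0.le _
      have h3 := (tendsto_pow_atTop_nhds_zero_of_lt_one h2 h1).const_mul (A * γ ^ (-m₀))
      rw [mul_zero] at h3
      refine h3.congr fun k => ?_
      rw [hfact k]
      ring
    obtain ⟨K, hK⟩ := eventually_atTop.mp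
      ((htend.eventually_lt_const one_pos).and (eventually_ge_atTop 1))
    refine ⟨(∑ j, q j) * Real.exp c₀ * (A ^ ηmin * γ ^ (-(m₀ * ηmin))), ?_, K, ?_⟩
    · have h4 : (0:ℝ) ≤ A ^ ηmin := (Real.rpow_pos_of_pos hA _).le
      have h5 : (0:ℝ) ≤ γ ^ (-(m₀ * ηmin)) := Real.rpow_nonneg hγ0.le _
      positivity
    intro k hk
    obtain ⟨hAγ, hk1⟩ := hK k hk
    have hkpos : (0:ℝ) < (k:ℝ) := by exact_mod_cast hk1
    have hBpos : (0:ℝ) < A * γ ^ ((1/ηmin+β) * (k:ℝ) - m₀) := by positivity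
    have hterm : ∀ j : Fin J, q j * m₁ j k *
        (Finset.Icc (⌈(k : ℝ) - m₂ j k⌉₊) k).sup' (hne j k) (fun ℓ => R ℓ ^ (η j))
        ≤ q j * (Real.exp c₀ * (k:ℝ) ^ c₁
            * ((A * γ ^ ((1/ηmin+β) * (k:ℝ) - m₀)) ^ ηmin)) := by
      intro j
      have hηj0 : (0:ℝ) ≤ η j := by linarith [hη j]
      have hm₁0 : (0:ℝ) < m₁ j k := lt_of_lt_of_le one_pos (hm₁ j k)
      have hm₁b : m₁ j k ≤ Real.exp c₀ * (k:ℝ) ^ c₁ := by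
        have h1 := hgrowth₁ j k hk1
        have h2 : m₁ j k = Real.exp (Real.log (m₁ j k)) := (Real.exp_log hm₁0).symm
        rw [h2, Real.rpow_def_of_pos hkpos, ← Real.exp_add]
        apply Real.exp_le_exp.mpr
        linarith
      have hsupb : (Finset.Icc (⌈(k : ℝ) - m₂ j k⌉₊) k).sup' (hne j k)
          (fun ℓ => R ℓ ^ (η j)) ≤ (A * γ ^ ((1/ηmin+β) * (k:ℝ) - m₀)) ^ ηmin := by
        apply Finset.sup'_le
        intro ℓ hℓ
        obtain ⟨h1, h2⟩ := Finset.mem_Icc.mp hℓ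
        have hexp : (1/ηmin+β) * (k:ℝ) - m₀ ≤ (ℓ:ℝ) := by
          have h3 : ((⌈(k : ℝ) - m₂ j k⌉₊ : ℕ) : ℝ) ≤ (ℓ:ℝ) := by exact_mod_cast h1
          have h4 := Nat.le_ceil ((k : ℝ) - m₂ j k)
          have h5 := hwgrow j k
          linarith
        have hRl : R ℓ ≤ A * γ ^ ((1/ηmin+β) * (k:ℝ) - m₀) := by
          have h6 : Rbar ℓ ≤ A * γ ^ ℓ := hbound ℓ
          rw [← Real.rpow_natCast γ ℓ] at h6
          have h7 : γ ^ ((ℓ:ℝ)) ≤ γ ^ ((1/ηmin+β) * (k:ℝ) - m₀) :=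
            Real.rpow_le_rpow_of_exponent_ge hγ0 hγ1.le hexp
          have h8 := mul_le_mul_of_nonneg_left h7 hA.le
          linarith [hRle ℓ]
        have h9 : R ℓ ^ (η j) ≤ (A * γ ^ ((1/ηmin+β) * (k:ℝ) - m₀)) ^ (η j) :=
          Real.rpow_le_rpow (hRnonneg ℓ) hRl hηj0
        have h10 : (A * γ ^ ((1/ηmin+β) * (k:ℝ) - m₀)) ^ (η j)
            ≤ (A * γ ^ ((1/ηmin+β) * (k:ℝ) - m₀)) ^ ηmin :=
          Real.rpow_le_rpow_of_exponent_ge hBpos hAγ.le (hηmle j)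
        exact h9.trans h10
      have hsup0 : (0:ℝ) ≤ (Finset.Icc (⌈(k : ℝ) - m₂ j k⌉₊) k).sup' (hne j k)
          (fun ℓ => R ℓ ^ (η j)) :=
        le_trans (Real.rpow_nonneg (hRnonneg k) _)
          (Finset.le_sup' (fun ℓ => R ℓ ^ (η j)) (hkmem j k))
      calc q j * m₁ j k * ((Finset.Icc (⌈(k : ℝ) - m₂ j k⌉₊) k).sup' (hne j k)
            (fun ℓ => R ℓ ^ (η j)))
          ≤ q j * (Real.exp c₀ * (k:ℝ) ^ c₁)
            * ((A * γ ^ ((1/ηmin+β) * (k:ℝ) - m₀)) ^ ηmin) := by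
            apply mul_le_mul
            · exact mul_le_mul_of_nonneg_left hm₁b (hq0 j)
            · exact hsupb
            · exact hsup0
            · exact mul_nonneg (hq0 j) (by positivity)
        _ = q j * (Real.exp c₀ * (k:ℝ) ^ c₁
            * ((A * γ ^ ((1/ηmin+β) * (k:ℝ) - m₀)) ^ ηmin)) := by ring
    have hNk : N k ≤ (∑ j, q j) * (Real.exp c₀ * (k:ℝ) ^ c₁
        * ((A * γ ^ ((1/ηmin+β) * (k:ℝ) - m₀)) ^ ηmin)) := by
      rw [hNdef, Finset.sum_mul]
      exact Finset.sum_le_sum fun j _ => hterm j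
    have hBeq : (A * γ ^ ((1/ηmin+β) * (k:ℝ) - m₀)) ^ ηmin
        = A ^ ηmin * (γ ^ (-(m₀ * ηmin)) * (γ ^ (1 + β * ηmin)) ^ k) := by
      rw [Real.mul_rpow hA.le (Real.rpow_nonneg hγ0.le _), ← Real.rpow_mul hγ0.le]
      have h11 : ((1/ηmin+β) * (k:ℝ) - m₀) * ηmin = -(m₀*ηmin) + (1+β*ηmin) * (k:ℝ) := by
        field_simp
        ring
      rw [h11, Real.rpow_add hγ0, Real.rpow_mul hγ0.le, Real.rpow_natCast]
    rw [hBeq] at hNk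
    calc N k ≤ _ := hNk
      _ = (∑ j, q j) * Real.exp c₀ * (A ^ ηmin * γ ^ (-(m₀ * ηmin)))
          * (k : ℝ) ^ c₁ * (γ ^ (1 + β * ηmin)) ^ k := by ring
  -- target rate νs with p < νs < 1 and νs^(1+βηmin) < p
  obtain ⟨νs, hνsp, hνs1, hνsb⟩ : ∃ νs : ℝ, p < νs ∧ νs < 1 ∧ νs ^ (1 + β * ηmin) < p := by
    have hbpos : (0:ℝ) < 1 + β * ηmin := by nlinarith
    have h1b : (1:ℝ)/(1+β*ηmin) < 1 := by rw [div_lt_one hbpos]; exact hb1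
    have h1b0 : (0:ℝ) < 1/(1+β*ηmin) := by positivity
    have hs1 : p ^ ((1:ℝ)/(1+β*ηmin)) < 1 := Real.rpow_lt_one hp0.le hp1 h1b0
    have hps : p < p ^ ((1:ℝ)/(1+β*ηmin)) := by
      have := Real.rpow_lt_rpow_of_exponent_gt hp0 hp1 h1b
      rwa [Real.rpow_one] at this
    refine ⟨(p + p ^ ((1:ℝ)/(1+β*ηmin)))/2, by linarith, by linarith, ?_⟩
    have hν0 : (0:ℝ) ≤ (p + p ^ ((1:ℝ)/(1+β*ηmin)))/2 := by linarith
    have h2 : (p + p ^ ((1:ℝ)/(1+β*ηmin)))/2 < p ^ ((1:ℝ)/(1+β*ηmin)) := by linarith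
    have h3 := Real.rpow_lt_rpow hν0 h2 hbpos
    have h4 : (p ^ ((1:ℝ)/(1+β*ηmin))) ^ (1+β*ηmin) = p := by
      rw [← Real.rpow_mul hp0.le]
      rw [one_div_mul_cancel hbpos.ne', Real.rpow_one]
    rwa [h4] at h3
  have hνs0 : 0 < νs := lt_trans hp0 hνsp
  -- bootstrap step
  have hstep : ∀ γ : ℝ, 0 < γ → γ < 1 → (∃ A, 0 < A ∧ ∀ k, Rbar k ≤ A * γ ^ k) →
      ∃ A, 0 < A ∧ ∀ k, Rbar k ≤ A * (max νs (γ ^ (1 + β * ηmin/2))) ^ k := by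
    rintro γ hγ0 hγ1 ⟨A, hA, hbound⟩
    obtain ⟨C, hC, K, hNK⟩ := hNbound γ A hA hγ0 hγ1 hbound
    have he2 : (0:ℝ) < β*ηmin/2 := by positivity
    have hγe : γ ^ (β*ηmin/2) < 1 := Real.rpow_lt_one hγ0.le hγ1 he2
    have hγe0 : (0:ℝ) ≤ γ ^ (β*ηmin/2) := Real.rpow_nonneg hγ0.le _
    obtain ⟨K₂, hK₂⟩ := eventually_atTop.mp
      ((aux_rpow_mul_geom_tendsto c₁ _ hγe0 hγe).eventually_lt_const one_pos)
    have hμp : p < max νs (γ ^ (1 + β * ηmin/2)) := lt_of_lt_of_le hνsp (le_max_left _ _)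
    have hbp0 : (0:ℝ) ≤ γ ^ (1 + β*ηmin/2) := Real.rpow_nonneg hγ0.le _
    have hNμ : ∀ k, max K K₂ ≤ k → N k ≤ C * (max νs (γ ^ (1 + β * ηmin/2))) ^ k := by
      intro k hk
      have h1 := hNK k (le_trans (le_max_left _ _) hk)
      have h2 := hK₂ k (le_trans (le_max_right _ _) hk)
      have hsplit : (γ ^ (1+β*ηmin))^k = (γ ^ (β*ηmin/2))^k * (γ ^ (1+β*ηmin/2))^k := by
        rw [← mul_pow, ← Real.rpow_add hγ0]
        congr 2
        ring
      calc N k ≤ C * (k:ℝ)^c₁ * ((γ ^ (β*ηmin/2))^k * (γ ^ (1+β*ηmin/2))^k) := by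
            rw [← hsplit]; exact h1
        _ = C * ((k:ℝ)^c₁ * (γ ^ (β*ηmin/2))^k) * (γ ^ (1+β*ηmin/2))^k := by ring
        _ ≤ C * 1 * (γ ^ (1+β*ηmin/2))^k := by
            apply mul_le_mul_of_nonneg_right _ (pow_nonneg hbp0 k)
            exact mul_le_mul_of_nonneg_left h2.le hC
        _ = C * (γ ^ (1+β*ηmin/2))^k := by ring
        _ ≤ C * (max νs (γ ^ (1 + β * ηmin/2))) ^ k :=
            mul_le_mul_of_nonneg_left (pow_le_pow_left₀ hbp0 (le_max_right _ _) k) hC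
    exact aux_lin_rec Rbar N p C _ hp0.le hμp hC (max K K₂) (fun k => (hRbS k).le) hNμ
  -- iterate the bootstrap
  have hiter : ∀ n : ℕ, ∃ γ : ℝ, 0 < γ ∧ γ < 1 ∧
      γ ≤ max νs (δ ^ ((1 + β*ηmin/2)^n)) ∧ ∃ A, 0 < A ∧ ∀ k, Rbar k ≤ A * γ ^ k := by
    intro n
    induction n with
    | zero =>
      refine ⟨δ, hδ0, hδ1, ?_, R 0, hR0, fun k => hPartI k k le_rfl⟩
      rw [pow_zero, Real.rpow_one]
      exact le_max_right _ _
    | succ n ihn =>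
      obtain ⟨γ, hγ0, hγ1, hγle, hEx⟩ := ihn
      refine ⟨max νs (γ ^ (1 + β*ηmin/2)), lt_of_lt_of_le hνs0 (le_max_left _ _),
        max_lt hνs1 (Real.rpow_lt_one hγ0.le hγ1 (by positivity)), ?_, hstep γ hγ0 hγ1 hEx⟩
      apply max_le (le_max_left _ _)
      have h1 : γ ^ (1+β*ηmin/2) ≤ (max νs (δ ^ ((1 + β*ηmin/2)^n))) ^ (1+β*ηmin/2) :=
        Real.rpow_le_rpow hγ0.le hγle (by positivity)
      rcases max_cases νs (δ ^ ((1 + β*ηmin/2)^n)) with ⟨heq, _⟩ | ⟨heq, _⟩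
      · rw [heq] at h1
        have h2 : νs ^ (1+β*ηmin/2) ≤ νs := by
          nth_rewrite 2 [← Real.rpow_one νs]
          exact Real.rpow_le_rpow_of_exponent_ge hνs0 hνs1.le (by nlinarith)
        exact le_trans (h1.trans h2) (le_max_left _ _)
      · rw [heq] at h1
        have h3 : (δ ^ ((1 + β*ηmin/2)^n)) ^ (1+β*ηmin/2) = δ ^ ((1 + β*ηmin/2)^(n+1)) := by
          rw [← Real.rpow_mul hδ0.le, ← pow_succ]
        rw [h3] at h1
        exact le_trans h1 (le_max_right _ _)
  -- choose n with δ ^ ((1+βηmin/2)^n) ≤ νs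
  have hδn : Tendsto (fun n : ℕ => δ ^ ((1 + β*ηmin/2)^n : ℝ)) atTop (nhds 0) := by
    have h1 : Tendsto (fun n : ℕ => ((1 + β*ηmin/2)^n : ℝ)) atTop atTop :=
      tendsto_pow_atTop_atTop_of_one_lt (by nlinarith)
    have h2 : Tendsto (fun n : ℕ => Real.log δ * ((1 + β*ηmin/2)^n : ℝ)) atTop atBot :=
      (tendsto_const_mul_atBot_of_neg hlogδ).mpr h1
    have h3 := Real.tendsto_exp_atBot.comp h2
    refine h3.congr fun n => ?_
    simp only [Function.comp_apply]
    rw [Real.rpow_def_of_pos hδ0]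
  obtain ⟨n, hn⟩ := (hδn.eventually_lt_const hνs0).exists
  obtain ⟨γ, hγ0, hγ1, hγle, A, hA, hbound⟩ := hiter n
  have hγνs : γ ≤ νs := hγle.trans (max_le le_rfl hn.le)
  have hboundν : ∀ k, Rbar k ≤ A * νs ^ k := fun k =>
    (hbound k).trans (mul_le_mul_of_nonneg_left (pow_le_pow_left₀ hγ0.le hγνs k) hA.le)
  -- final step: ratio convergence
  obtain ⟨C, hC, K, hNK⟩ := hNbound νs A hA hνs0 hνs1 hboundν
  have hquot : Tendsto (fun k => N k / Rbar k) atTop (nhds 0) := by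
    have hr0 : (0:ℝ) ≤ νs ^ (1+β*ηmin) / p := by positivity
    have hr1 : νs ^ (1+β*ηmin) / p < 1 := (div_lt_one hp0).mpr hνsb
    have hv := (aux_rpow_mul_geom_tendsto c₁ _ hr0 hr1).const_mul (C / R 0)
    rw [mul_zero] at hv
    refine tendsto_of_tendsto_of_tendsto_of_le_of_le' tendsto_const_nhds hv ?_ ?_
    · exact Eventually.of_forall fun k => div_nonneg (hNnn k) (hRbpos k).le
    · filter_upwards [eventually_ge_atTop K] with k hk
      have h1 := hNK k hk
      have h2 := hRblow k
      have h3 : (0:ℝ) < R 0 * p ^ k := by positivity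
      have hnum : (0:ℝ) ≤ C * (k:ℝ)^c₁ * (νs^(1+β*ηmin))^k :=
        mul_nonneg (mul_nonneg hC (Real.rpow_nonneg (Nat.cast_nonneg k) _))
          (pow_nonneg (Real.rpow_nonneg hνs0.le _) _)
      have h4 : N k / Rbar k ≤ (C * (k:ℝ)^c₁ * (νs^(1+β*ηmin))^k) / (R 0 * p ^ k) :=
        div_le_div₀ hnum h1 h3 h2
      have h5 : (C * (k:ℝ)^c₁ * (νs^(1+β*ηmin))^k) / (R 0 * p ^ k)
          = C / R 0 * ((k:ℝ)^c₁ * (νs^(1+β*ηmin)/p)^k) := by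
        rw [div_pow]
        field_simp
      rw [h5] at h4
      exact h4
  refine ⟨Rbar, hRle, ?_⟩
  have hfin : (fun k => Rbar (k+1) / Rbar k) = fun k => p + N k / Rbar k := by
    funext k
    rw [hRbS k, add_div, mul_div_assoc, div_self (hRbpos k).ne', mul_one]
  rw [hfin]
  have hfin2 := hquot.const_add p
  simpa using hfin2
end

section
/- (Theorem 1, part 1: linear convergence of SUCAG.) Under the SUCAG setup, assume additionally μ ≥ 1, θ⁰ ≠ θ*, and the full delay assumption (A4): (m_k)_{k≥1} is nondecreasing with m_1 ≥ 1, 4 log m_k ≤ c₀ + log k for all k ≥ 1 (for some c₀ ≥ 0), and 2 m_k ≤ m₀ + (1/3 − β) k for all k ≥ 1 (for some m₀ > 0 and β ∈ (0, 1/3)). Fix Δ ∈ (0,1). Then there exists a threshold γ̄ > 0 (depending only on μ, L, L̄_H, c₀, β, m₀, Δ and ‖θ⁰ − θ*‖) such that for every step size γ with 0 < γ ≤ min{γ̄, 2/(μ+L)}, setting δ := 1 − Δγ·2μL/(μ+L) ∈ (0,1), the SUCAG iterates converge linearly: ‖θ^k − θ*‖² ≤ δ^k ‖θ⁰ − θ*‖²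 for all k ≥ 0. -/
open scoped BigOperators RealInnerProductSpace

section SucagHelpers

variable {H : Type*} [NormedAddCommGroup H] [NormedSpace ℝ H]

/-- Taylor-type bound for a map with Lipschitz derivative. -/
lemma sucag_taylor (φ : H → H) (hφ : Differentiable ℝ φ) (c : ℝ) (hc : 0 ≤ c)
    (hlip : ∀ x y, ‖fderiv ℝ φ x - fderiv ℝ φ y‖ ≤ c * ‖x - y‖) (x y : H) :
    ‖φ y - φ x - fderiv ℝ φ x (y - x)‖ ≤ (c * ‖y - x‖) * ‖y - x‖ := by
  refine Convex.norm_image_sub_le_of_norm_fderiv_le' (fun z _ => hφ.differentiableAt)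
    (fun z hz => ?_) (convex_segment x y) (left_mem_segment ℝ x y) (right_mem_segment ℝ x y)
  have h1 : dist x z ≤ dist x y := by
    have := dist_add_dist_of_mem_segment hz
    nlinarith [dist_nonneg (x := z) (y := y)]
  calc ‖fderiv ℝ φ z - fderiv ℝ φ x‖ ≤ c * ‖z - x‖ := hlip z x
    _ ≤ c * ‖y - x‖ := by
        have : ‖z - x‖ ≤ ‖y - x‖ := by
          rw [← dist_eq_norm, ← dist_eq_norm, dist_comm z x, dist_comm y x]; exact h1
        exact mul_le_mul_of_nonneg_left this hc

/-- Telescoping norm bound for the iterates. -/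
lemma sucag_telescope (θ : ℕ → H) (v : ℕ → H) (h : ∀ k, θ (k + 1) = θ k - v k)
    (G : ℝ) (a b : ℕ) (hab : a ≤ b) (hG : ∀ l, a ≤ l → l < b → ‖v l‖ ≤ G) :
    ‖θ b - θ a‖ ≤ (b - a : ℕ) * G := by
  induction b with
  | zero => simp [Nat.le_zero.mp hab]
  | succ n ih =>
    rcases Nat.lt_or_ge a (n + 1) with hlt | hge
    · have han : a ≤ n := Nat.lt_succ_iff.mp hlt
      have h1 : ‖θ n - θ a‖ ≤ (n - a : ℕ) * G :=
        ih han (fun l hl1 hl2 => hG l hl1 (Nat.lt_succ_of_lt hl2))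
      have h2 : ‖θ (n + 1) - θ n‖ ≤ G := by
        rw [h n]; simpa using hG n han (Nat.lt_succ_self n)
      have h3 : θ (n + 1) - θ a = (θ (n + 1) - θ n) + (θ n - θ a) := by abel
      rw [h3]
      have h4 : ((n + 1 - a : ℕ) : ℝ) = 1 + ((n - a : ℕ) : ℝ) := by
        have : n + 1 - a = (n - a) + 1 := by omega
        rw [this]; push_cast; ring
      calc ‖(θ (n + 1) - θ n) + (θ n - θ a)‖ ≤ ‖θ (n + 1) - θ n‖ + ‖θ n - θ a‖ :=
            norm_add_le _ _
        _ ≤ G + (n - a : ℕ) * G := add_le_add h2 h1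
        _ = ((n + 1 - a : ℕ) : ℝ) * G := by rw [h4]; ring
    · have : a = n + 1 := le_antisymm hab hge
      subst this; simp

/-- `x^(1/8) * exp(-(c*x)) ≤ c^(-(1/8))` for `x ≥ 0`, `c > 0`. -/
lemma sucag_pow_exp (c x : ℝ) (hc : 0 < c) (hx : 0 ≤ x) :
    x ^ ((1:ℝ)/8) * Real.exp (-(c * x)) ≤ c ^ (-((1:ℝ)/8)) := by
  have h1 : x ≤ Real.exp (c * x) / c := by
    rw [le_div_iff₀ hc]
    calc x * c = c * x := mul_comm x c
      _ ≤ Real.exp (c * x) := (Real.add_one_le_exp (c * x)).trans' (by linarith)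
  have h2 : x ^ ((1:ℝ)/8) ≤ (Real.exp (c * x) / c) ^ ((1:ℝ)/8) :=
    Real.rpow_le_rpow hx h1 (by norm_num)
  have h3 : (Real.exp (c * x) / c) ^ ((1:ℝ)/8)
      = Real.exp (c * x / 8) * c ^ (-((1:ℝ)/8)) := by
    rw [Real.div_rpow (Real.exp_nonneg _) hc.le, Real.rpow_neg hc.le]
    rw [← Real.exp_one_rpow (c * x), ← Real.rpow_mul (Real.exp_pos 1).le, Real.exp_one_rpow]
    ring_nf
  calc x ^ ((1:ℝ)/8) * Real.exp (-(c * x))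
      ≤ (Real.exp (c * x / 8) * c ^ (-((1:ℝ)/8))) * Real.exp (-(c * x)) := by
        apply mul_le_mul_of_nonneg_right (h2.trans_eq h3) (Real.exp_nonneg _)
    _ = c ^ (-((1:ℝ)/8)) * (Real.exp (c * x / 8) / Real.exp (c * x)) := by
        rw [Real.exp_neg, div_eq_mul_inv]; ring
    _ ≤ c ^ (-((1:ℝ)/8)) * 1 := by
        apply mul_le_mul_of_nonneg_left _ (Real.rpow_nonneg hc.le _)
        rw [div_le_one (Real.exp_pos _), Real.exp_le_exp]; nlinarith
    _ = c ^ (-((1:ℝ)/8)) := mul_one _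

lemma sucag_sq_le {a b : ℝ} (ha : 0 ≤ a) (hb : 0 ≤ b) (h : a ^ 2 ≤ b ^ 2) : a ≤ b := by
  nlinarith

lemma sucag_quad {u w X c δ' : ℝ} (hw0 : 0 ≤ w) (hX : 0 ≤ X) (hc : 0 ≤ c) (hc3 : c ≤ 3)
    (h1 : u ^ 2 ≤ (δ' - c) * X ^ 2) (h2 : u ≤ X) (h3 : w ≤ c / 3 * X) :
    (u + w) ^ 2 ≤ δ' * X ^ 2 := by
  nlinarith [mul_le_mul h2 h3 hw0 hX, pow_le_pow_left₀ hw0 h3 2, sq_nonneg X,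
    mul_nonneg (mul_nonneg hc (by linarith : (0:ℝ) ≤ 3 - c)) (sq_nonneg X)]

end SucagHelpers

section SucagGradient

variable {H : Type*} [NormedAddCommGroup H] [InnerProductSpace ℝ H] [CompleteSpace H]

lemma sucag_gradient_avg {N : ℕ} (f : Fin N → H → ℝ) (x : H)
    (hdf : ∀ i, DifferentiableAt ℝ (f i) x) :
    gradient (fun y => (N:ℝ)⁻¹ * ∑ i, f i y) x = (N:ℝ)⁻¹ • ∑ i, gradient (f i) x := by
  have hS : DifferentiableAt ℝ (fun y => ∑ i, f i y) x :=
    DifferentiableAt.fun_sum fun i _ => hdf i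
  unfold gradient
  rw [fderiv_const_mul hS, fderiv_fun_sum fun i _ => hdf i, map_smul, map_sum]

lemma sucag_gradient_min (F : H → ℝ) (θ : H) (h : ∀ x, F θ ≤ F x) :
    gradient F θ = 0 := by
  have h1 : IsLocalMin F θ := Filter.Eventually.of_forall h
  have h2 := h1.fderiv_eq_zero
  unfold gradient; rw [h2, map_zero]

lemma sucag_differentiable_gradient (f : H → ℝ) (hf : ContDiff ℝ 2 f) :
    Differentiable ℝ (gradient f) := by
  have h1 : ContDiff ℝ 1 (fderiv ℝ f) := hf.fderiv_right (by norm_num)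
  have h2 : Differentiable ℝ (fderiv ℝ f) := h1.differentiable (by norm_num)
  have h3 : Differentiable ℝ (fun p : (H →L[ℝ] ℝ) => (InnerProductSpace.toDual ℝ H).symm p) :=
    (InnerProductSpace.toDual ℝ H).symm.toContinuousLinearEquiv.differentiable
  exact h3.comp h2

end SucagGradient

set_option maxHeartbeats 1000000 in
/-- Theorem 1, part 1: linear convergence of SUCAG. The threshold
`γ̄` depends only on `μ, L, L̄_H, c₀, β, m₀, Δ` and `R₀ = ‖θ⁰ − θ*‖`, since it is
quantified before all other data. -/
theorem sucag_linear_convergence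
    (μ L LbarH c₀ β m₀ Δ R₀ : ℝ)
    (hμ : 1 ≤ μ) (hL : 0 < L) (hLbarH : 0 < LbarH)
    (hc₀ : 0 ≤ c₀) (hβ0 : 0 < β) (hβ : β < 1 / 3) (hm₀ : 0 < m₀)
    (hΔ0 : 0 < Δ) (hΔ1 : Δ < 1) (hR₀ : 0 < R₀) :
    ∃ γbar : ℝ, 0 < γbar ∧
      ∀ (d N : ℕ), 1 ≤ d → 1 ≤ N →
      ∀ (f : Fin N → EuclideanSpace ℝ (Fin d) → ℝ),
      (∀ i, ConvexOn ℝ Set.univ (f i)) →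
      (∀ i, ContDiff ℝ 2 (f i)) →
      ∀ (LH : Fin N → ℝ), (∀ i, 0 < LH i) →
      (∀ i x y, ‖fderiv ℝ (gradient (f i)) x - fderiv ℝ (gradient (f i)) y‖
        ≤ LH i * ‖x - y‖) →
      IsGreatest (Set.range LH) LbarH →
      ∀ (F : EuclideanSpace ℝ (Fin d) → ℝ),
      F = (fun x => (N : ℝ)⁻¹ * ∑ i, f i x) →
      (∀ x y, ‖gradient F x - gradient F y‖ ≤ L * ‖x - y‖) →
      (∀ x y : EuclideanSpace ℝ (Fin d),
        F x + ⟪gradient F x, y - x⟫ + μ / 2 * ‖y - x‖ ^ 2 ≤ F y) →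
      ∀ (θstar : EuclideanSpace ℝ (Fin d)), (∀ x, F θstar ≤ F x) →
      -- the delay assumption (A4)
      ∀ (m : ℕ → ℝ), 1 ≤ m 1 →
      (∀ j l : ℕ, 1 ≤ j → j ≤ l → m j ≤ m l) →
      (∀ k : ℕ, 1 ≤ k → 4 * Real.log (m k) ≤ c₀ + Real.log k) →
      (∀ k : ℕ, 1 ≤ k → 2 * m k ≤ m₀ + (1 / 3 - β) * k) →
      -- the step size
      ∀ (γ : ℝ), 0 < γ → γ ≤ γbar → γ ≤ 2 / (μ + L) →
      -- the SUCAG iterates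
      ∀ (idx : ℕ → Fin N) (τ : ℕ → Fin N → ℕ),
      (∀ (k : ℕ) (i : Fin N), τ k i ≤ k - 1) →
      (∀ k : ℕ, 1 ≤ k → ∀ i, (k : ℝ) - (τ k i : ℝ) ≤ m k) →
      ∀ (θ : ℕ → EuclideanSpace ℝ (Fin d))
        (gA : Fin N → ℕ → EuclideanSpace ℝ (Fin d) → EuclideanSpace ℝ (Fin d)),
      (∀ i k x, gA i k x = gradient (f i) (θ (τ k i))
        + (fderiv ℝ (gradient (f i)) (θ (τ k i))) (x - θ (τ k i))) →
      ∀ (g : ℕ → EuclideanSpace ℝ (Fin d)),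
      (∀ k, g k = (gradient (f (idx k)) (θ k) - gA (idx k) k (θ k))
        + (N : ℝ)⁻¹ • ∑ i, gA i k (θ k)) →
      (∀ k, θ (k + 1) = θ k - γ • g k) →
      -- the initialization
      ‖θ 0 - θstar‖ = R₀ →
      -- conclusion: with δ := 1 − Δγ·2μL/(μ+L) ∈ (0,1), linear convergence
      (0 < 1 - Δ * γ * (2 * μ * L / (μ + L))) ∧
      (1 - Δ * γ * (2 * μ * L / (μ + L)) < 1) ∧
      ∀ k : ℕ, ‖θ k - θstar‖ ^ 2
        ≤ (1 - Δ * γ * (2 * μ * L / (μ + L))) ^ k * ‖θ 0 - θstar‖ ^ 2 := by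
  have hμ0 : (0:ℝ) < μ := lt_of_lt_of_le one_pos hμ
  have hμL : (0:ℝ) < μ + L := by linarith
  have h1Δ : (0:ℝ) < 1 - Δ := by linarith
  obtain ⟨σ, hσdef⟩ : ∃ x : ℝ, x = (1 - Δ) * μ * L / (μ + L) := ⟨_, rfl⟩
  obtain ⟨a, hadef⟩ : ∃ x : ℝ, x = Δ * μ * L / (4 * (μ + L)) := ⟨_, rfl⟩
  obtain ⟨K, hKdef⟩ : ∃ x : ℝ,
      x = 8 * LbarH * R₀ * (L ^ ((1:ℝ)/2)) * Real.exp (c₀ / 8) *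
        ((1 - Δ) ^ (-(3 * m₀ / 8))) * (a ^ (-((1:ℝ)/8))) := ⟨_, rfl⟩
  have hσ : 0 < σ := by rw [hσdef]; positivity
  have ha : 0 < a := by rw [hadef]; positivity
  have hK : 0 < K := by rw [hKdef]; positivity
  refine ⟨min (min ((σ / (3 * K)) ^ ((8:ℝ)/3)) (σ / L ^ 2))
      (min (μ / L ^ 2) (min (3 / σ) 1)), by positivity, ?_⟩
  intro d N hd hN f hconv hf2 LH hLH0 hLHlip hLHgr F hFdef hFlip hsc θstar hmin
    m hm1 hmmono hmlog hmlin γ hγ0 hγbar hγ2 idx τ hτ hτm θ gA hgA g hg hθrec hθ0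
  -- step-size consequences
  have hγ1 : γ ≤ (σ / (3 * K)) ^ ((8:ℝ)/3) :=
    hγbar.trans ((min_le_left _ _).trans (min_le_left _ _))
  have hγσL : γ ≤ σ / L ^ 2 :=
    hγbar.trans ((min_le_left _ _).trans (min_le_right _ _))
  have hγμL : γ ≤ μ / L ^ 2 :=
    hγbar.trans ((min_le_right _ _).trans (min_le_left _ _))
  have hγ3σ : γ ≤ 3 / σ :=
    hγbar.trans ((min_le_right _ _).trans ((min_le_right _ _).trans (min_le_left _ _)))
  have hL2 : (0:ℝ) < L ^ 2 := by positivity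
  have hγL2σ : γ * L ^ 2 ≤ σ := (le_div_iff₀ hL2).mp hγσL
  have hγL2μ : γ * L ^ 2 ≤ μ := (le_div_iff₀ hL2).mp hγμL
  have hγσ3 : γ * σ ≤ 3 := (le_div_iff₀ hσ).mp hγ3σ
  set δ := 1 - Δ * γ * (2 * μ * L / (μ + L)) with hδdef
  have h4μL : 4 * μ * L ≤ (μ + L) ^ 2 := by nlinarith [sq_nonneg (μ - L)]
  have hδub : Δ * γ * (2 * μ * L / (μ + L)) ≤ Δ := by
    have e1 : Δ * γ * (2 * μ * L / (μ + L)) ≤ Δ * (2 / (μ + L)) * (2 * μ * L / (μ + L)) := by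
      gcongr
    have e2 : Δ * (2 / (μ + L)) * (2 * μ * L / (μ + L)) = Δ * (4 * μ * L / (μ + L) ^ 2) := by
      field_simp; ring
    have e3 : 4 * μ * L / (μ + L) ^ 2 ≤ 1 := by
      rw [div_le_one (by positivity)]; linarith
    calc Δ * γ * (2 * μ * L / (μ + L)) ≤ Δ * (2 / (μ + L)) * (2 * μ * L / (μ + L)) := e1
      _ = Δ * (4 * μ * L / (μ + L) ^ 2) := e2
      _ ≤ Δ * 1 := mul_le_mul_of_nonneg_left e3 hΔ0.le
      _ = Δ := mul_one Δ
  have hδlb : 1 - Δ ≤ δ := by rw [hδdef]; linarith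
  have hδ0 : 0 < δ := by linarith
  have hδgt : 0 < Δ * γ * (2 * μ * L / (μ + L)) := by positivity
  have hδ1 : δ < 1 := by rw [hδdef]; linarith
  refine ⟨hδ0, hδ1, ?_⟩
  -- basic analytic facts
  have hdf : ∀ i, Differentiable ℝ (f i) := fun i => (hf2 i).differentiable (by norm_num)
  have hdgf : ∀ i, Differentiable ℝ (gradient (f i)) :=
    fun i => sucag_differentiable_gradient (f i) (hf2 i)
  have hgradF : ∀ x, gradient F x = (N:ℝ)⁻¹ • ∑ i, gradient (f i) x := by
    intro x; rw [hFdef]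
    exact sucag_gradient_avg f x (fun i => (hdf i).differentiableAt)
  have hgrad0 : gradient F θstar = 0 := sucag_gradient_min F θstar hmin
  have hLip1 : ∀ x, ‖gradient F x‖ ≤ L * ‖x - θstar‖ := by
    intro x
    have := hFlip x θstar
    rwa [hgrad0, sub_zero] at this
  have hmono : ∀ x : EuclideanSpace ℝ (Fin d),
      μ * ‖x - θstar‖ ^ 2 ≤ ⟪gradient F x, x - θstar⟫ := by
    intro x
    have h1 := hsc x θstar
    have h2 := hsc θstar x
    rw [hgrad0, inner_zero_left] at h2
    rw [← neg_sub x θstar, inner_neg_right, norm_neg] at h1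
    linarith
  -- square root conversion
  have hhalf : ∀ j : ℕ, (δ ^ ((j:ℝ)/2)) ^ 2 = δ ^ j := by
    intro j
    rw [← Real.rpow_natCast (δ ^ ((j:ℝ)/2)) 2, ← Real.rpow_mul hδ0.le]
    rw [show (j:ℝ)/2 * ((2:ℕ):ℝ) = ((j:ℕ):ℝ) by push_cast; ring, Real.rpow_natCast]
  have hroot : ∀ j : ℕ, ‖θ j - θstar‖ ^ 2 ≤ δ ^ j * R₀ ^ 2 →
      ‖θ j - θstar‖ ≤ δ ^ ((j:ℝ)/2) * R₀ := by
    intro j hsq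
    have h1 : (δ ^ ((j:ℝ)/2) * R₀) ^ 2 = δ ^ j * R₀ ^ 2 := by rw [mul_pow, hhalf j]
    have h2 : (0:ℝ) ≤ δ ^ ((j:ℝ)/2) * R₀ := by positivity
    exact sucag_sq_le (norm_nonneg _) h2 (by rw [h1]; exact hsq)
  -- contraction of the exact gradient step
  have hcontr : ∀ x : EuclideanSpace ℝ (Fin d),
      ‖x - θstar - γ • gradient F x‖ ^ 2 ≤ (δ - σ * γ) * ‖x - θstar‖ ^ 2 ∧
      ‖x - θstar - γ • gradient F x‖ ≤ ‖x - θstar‖ := by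
    intro x
    have hexp : ‖x - θstar - γ • gradient F x‖ ^ 2
        = ‖x - θstar‖ ^ 2 - 2 * γ * ⟪gradient F x, x - θstar⟫
          + γ ^ 2 * ‖gradient F x‖ ^ 2 := by
      rw [norm_sub_sq_real, real_inner_smul_right, norm_smul, Real.norm_eq_abs,
        abs_of_pos hγ0, real_inner_comm (x - θstar)]
      ring
    have hm := hmono x
    have hn : ‖gradient F x‖ ^ 2 ≤ (L * ‖x - θstar‖) ^ 2 :=
      pow_le_pow_left₀ (norm_nonneg _) (hLip1 x) 2
    have hquad : ‖x - θstar - γ • gradient F x‖ ^ 2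
        ≤ (1 - 2 * γ * μ + γ ^ 2 * L ^ 2) * ‖x - θstar‖ ^ 2 := by
      rw [hexp]
      linarith [mul_le_mul_of_nonneg_left hm (by linarith : (0:ℝ) ≤ 2 * γ),
        mul_le_mul_of_nonneg_left hn (sq_nonneg γ)]
    constructor
    · have key : Δ * (2 * μ * L / (μ + L)) + 2 * σ ≤ 2 * μ := by
        have e1 : Δ * (2 * μ * L / (μ + L)) + 2 * σ = 2 * μ * L / (μ + L) := by
          rw [hσdef]; field_simp; ring
        rw [e1, div_le_iff₀ hμL]
        linarith [mul_pos hμ0 hμ0]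
      have hdiff : 1 - 2 * γ * μ + γ ^ 2 * L ^ 2 ≤ δ - σ * γ := by
        have h3 := mul_le_mul_of_nonneg_left key hγ0.le
        have h2 : γ * (γ * L ^ 2) ≤ γ * σ := mul_le_mul_of_nonneg_left hγL2σ hγ0.le
        rw [hδdef]; linarith
      linarith [hquad, mul_le_mul_of_nonneg_right hdiff (sq_nonneg ‖x - θstar‖)]
    · have h1 : 1 - 2 * γ * μ + γ ^ 2 * L ^ 2 ≤ 1 := by
        linarith [mul_le_mul_of_nonneg_left hγL2μ hγ0.le, mul_nonneg hγ0.le hμ0.le]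
      have h2 : ‖x - θstar - γ • gradient F x‖ ^ 2 ≤ ‖x - θstar‖ ^ 2 := by
        have h3 := mul_le_mul_of_nonneg_right h1 (sq_nonneg ‖x - θstar‖)
        rw [one_mul] at h3
        linarith [hquad]
      exact sucag_sq_le (norm_nonneg _) (norm_nonneg _) h2
  -- Taylor bound with the uniform constant
  have hTay : ∀ (i : Fin N) (x y : EuclideanSpace ℝ (Fin d)),
      ‖gradient (f i) y - gradient (f i) x - fderiv ℝ (gradient (f i)) x (y - x)‖
        ≤ LbarH * (‖y - x‖ * ‖y - x‖) := by
    intro i x y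
    have h0 := sucag_taylor (gradient (f i)) (hdgf i) (LH i) (hLH0 i).le (hLHlip i) x y
    have hle : LH i ≤ LbarH := hLHgr.2 ⟨i, rfl⟩
    have h1 := mul_le_mul_of_nonneg_right
      (mul_le_mul_of_nonneg_right hle (norm_nonneg (y - x))) (norm_nonneg (y - x))
    calc ‖gradient (f i) y - gradient (f i) x - fderiv ℝ (gradient (f i)) x (y - x)‖
        ≤ (LH i * ‖y - x‖) * ‖y - x‖ := h0
      _ ≤ (LbarH * ‖y - x‖) * ‖y - x‖ := h1
      _ = LbarH * (‖y - x‖ * ‖y - x‖) := by ring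
  -- the error bound
  have hEbound : ∀ k : ℕ,
      (∀ j, j ≤ k → ‖θ j - θstar‖ ^ 2 ≤ δ ^ j * R₀ ^ 2) →
      (∀ j, j < k → ‖g j‖ ≤ 2 * L * R₀) →
      ‖g k - gradient F (θ k)‖ ≤ σ / 3 * δ ^ ((k:ℝ)/2) * R₀ := by
    intro k hsq hgb
    rcases Nat.eq_zero_or_pos k with hk0 | hk1
    · subst hk0
      have hτ0 : ∀ i, τ 0 i = 0 := fun i => Nat.le_zero.mp (by simpa using hτ 0 i)
      have hgA0 : ∀ i : Fin N, gA i 0 (θ 0) = gradient (f i) (θ 0) := by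
        intro i
        rw [hgA i 0 (θ 0), hτ0 i, sub_self, map_zero, add_zero]
      have hg0 : g 0 = gradient F (θ 0) := by
        rw [hg 0, hgradF (θ 0)]
        simp [hgA0]
      rw [hg0, sub_self, norm_zero]
      positivity
    · -- k ≥ 1
      have hk1' : 1 ≤ k := hk1
      have hmk1 : 1 ≤ m k := le_trans hm1 (hmmono 1 k le_rfl hk1')
      have hmk0 : 0 < m k := lt_of_lt_of_le one_pos hmk1
      have hk0R : (0:ℝ) < (k:ℝ) := by exact_mod_cast hk1
      -- the two bounds on the delayed differences
      have hDa : ∀ i, ‖θ k - θ (τ k i)‖ ≤ 2 * R₀ * δ ^ (((k:ℝ) - m k)/2) := by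
        intro i
        have hτk : τ k i ≤ k := le_trans (hτ k i) (Nat.sub_le k 1)
        have h1 : ‖θ k - θ (τ k i)‖ ≤ ‖θ k - θstar‖ + ‖θ (τ k i) - θstar‖ := by
          have he : θ k - θ (τ k i) = (θ k - θstar) - (θ (τ k i) - θstar) := by abel
          rw [he]; exact norm_sub_le _ _
        have h2 := hroot k (hsq k le_rfl)
        have h3 := hroot (τ k i) (hsq (τ k i) hτk)
        have h4 : δ ^ ((k:ℝ)/2) ≤ δ ^ (((k:ℝ) - m k)/2) :=
          Real.rpow_le_rpow_of_exponent_ge hδ0 hδ1.le (by linarith)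
        have h5 : δ ^ (((τ k i : ℕ):ℝ)/2) ≤ δ ^ (((k:ℝ) - m k)/2) := by
          have := hτm k hk1' i
          exact Real.rpow_le_rpow_of_exponent_ge hδ0 hδ1.le (by linarith)
        have h6 := mul_le_mul_of_nonneg_right h4 hR₀.le
        have h7 := mul_le_mul_of_nonneg_right h5 hR₀.le
        calc ‖θ k - θ (τ k i)‖ ≤ ‖θ k - θstar‖ + ‖θ (τ k i) - θstar‖ := h1
          _ ≤ δ ^ ((k:ℝ)/2) * R₀ + δ ^ (((τ k i : ℕ):ℝ)/2) * R₀ := add_le_add h2 h3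
          _ ≤ 2 * R₀ * δ ^ (((k:ℝ) - m k)/2) := by linarith
      have hDb : ∀ i, ‖θ k - θ (τ k i)‖ ≤ 2 * γ * L * R₀ * m k := by
        intro i
        have hτk : τ k i ≤ k := le_trans (hτ k i) (Nat.sub_le k 1)
        have h1 : ‖θ k - θ (τ k i)‖ ≤ ((k - τ k i : ℕ):ℝ) * (γ * (2 * L * R₀)) := by
          refine sucag_telescope θ (fun l => γ • g l) hθrec (γ * (2 * L * R₀))
            (τ k i) k hτk (fun l _ hl2 => ?_)
          rw [norm_smul, Real.norm_eq_abs, abs_of_pos hγ0]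
          exact mul_le_mul_of_nonneg_left (hgb l hl2) hγ0.le
        have h2 : ((k - τ k i : ℕ):ℝ) ≤ m k := by
          have h3 := hτm k hk1' i
          rw [Nat.cast_sub hτk]; linarith
        calc ‖θ k - θ (τ k i)‖ ≤ ((k - τ k i : ℕ):ℝ) * (γ * (2 * L * R₀)) := h1
          _ ≤ m k * (γ * (2 * L * R₀)) := by
              exact mul_le_mul_of_nonneg_right h2 (by positivity)
          _ = 2 * γ * L * R₀ * m k := by ring
      -- per-summand error
      have hBa0 : (0:ℝ) ≤ 2 * R₀ * δ ^ (((k:ℝ) - m k)/2) := by positivity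
      have hBb0 : (0:ℝ) ≤ 2 * γ * L * R₀ * m k := by positivity
      have he : ∀ i : Fin N, ‖gA i k (θ k) - gradient (f i) (θ k)‖
          ≤ LbarH * ((2 * R₀ * δ ^ (((k:ℝ) - m k)/2)) ^ ((3:ℝ)/2)
            * (2 * γ * L * R₀ * m k) ^ ((1:ℝ)/2)) := by
        intro i
        have h0 := hTay i (θ (τ k i)) (θ k)
        have heq : gA i k (θ k) - gradient (f i) (θ k)
            = -(gradient (f i) (θ k) - gradient (f i) (θ (τ k i))
              - fderiv ℝ (gradient (f i)) (θ (τ k i)) (θ k - θ (τ k i))) := by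
          rw [hgA i k (θ k)]; abel
        rw [heq, norm_neg]
        have hDD : ‖θ k - θ (τ k i)‖ * ‖θ k - θ (τ k i)‖
            = ‖θ k - θ (τ k i)‖ ^ ((3:ℝ)/2) * ‖θ k - θ (τ k i)‖ ^ ((1:ℝ)/2) := by
          rw [← Real.rpow_add' (norm_nonneg _) (by norm_num)]
          rw [show (3:ℝ)/2 + 1/2 = ((2:ℕ):ℝ) by norm_num, Real.rpow_natCast]
          ring
        have hmono2 : ‖θ k - θ (τ k i)‖ ^ ((3:ℝ)/2) * ‖θ k - θ (τ k i)‖ ^ ((1:ℝ)/2)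
            ≤ (2 * R₀ * δ ^ (((k:ℝ) - m k)/2)) ^ ((3:ℝ)/2)
              * (2 * γ * L * R₀ * m k) ^ ((1:ℝ)/2) :=
          mul_le_mul (Real.rpow_le_rpow (norm_nonneg _) (hDa i) (by norm_num))
            (Real.rpow_le_rpow (norm_nonneg _) (hDb i) (by norm_num))
            (Real.rpow_nonneg (norm_nonneg _) _) (Real.rpow_nonneg hBa0 _)
        calc ‖gradient (f i) (θ k) - gradient (f i) (θ (τ k i))
              - fderiv ℝ (gradient (f i)) (θ (τ k i)) (θ k - θ (τ k i))‖
            ≤ LbarH * (‖θ k - θ (τ k i)‖ * ‖θ k - θ (τ k i)‖) := h0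
          _ ≤ _ := by
              rw [hDD]
              exact mul_le_mul_of_nonneg_left hmono2 hLbarH.le
      -- total error
      have hgsub : g k - gradient F (θ k)
          = (gradient (f (idx k)) (θ k) - gA (idx k) k (θ k))
            + (N:ℝ)⁻¹ • (∑ i, (gA i k (θ k) - gradient (f i) (θ k))) := by
        rw [hg k, hgradF (θ k), Finset.sum_sub_distrib, smul_sub]
        abel
      have hN0 : (0:ℝ) < (N:ℝ) := by exact_mod_cast hN
      have hEk : ‖g k - gradient F (θ k)‖
          ≤ 2 * (LbarH * ((2 * R₀ * δ ^ (((k:ℝ) - m k)/2)) ^ ((3:ℝ)/2)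
            * (2 * γ * L * R₀ * m k) ^ ((1:ℝ)/2))) := by
        rw [hgsub]
        have hT0 : (0:ℝ) ≤ LbarH * ((2 * R₀ * δ ^ (((k:ℝ) - m k)/2)) ^ ((3:ℝ)/2)
            * (2 * γ * L * R₀ * m k) ^ ((1:ℝ)/2)) := by
          have := Real.rpow_nonneg hBa0 ((3:ℝ)/2)
          have := Real.rpow_nonneg hBb0 ((1:ℝ)/2)
          positivity
        have h1 : ‖gradient (f (idx k)) (θ k) - gA (idx k) k (θ k)‖
            ≤ LbarH * ((2 * R₀ * δ ^ (((k:ℝ) - m k)/2)) ^ ((3:ℝ)/2)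
              * (2 * γ * L * R₀ * m k) ^ ((1:ℝ)/2)) := by
          rw [norm_sub_rev]; exact he (idx k)
        have h2 : ‖(N:ℝ)⁻¹ • (∑ i, (gA i k (θ k) - gradient (f i) (θ k)))‖
            ≤ LbarH * ((2 * R₀ * δ ^ (((k:ℝ) - m k)/2)) ^ ((3:ℝ)/2)
              * (2 * γ * L * R₀ * m k) ^ ((1:ℝ)/2)) := by
          rw [norm_smul, Real.norm_eq_abs, abs_of_nonneg (by positivity : (0:ℝ) ≤ (N:ℝ)⁻¹)]
          have h3 : ‖∑ i, (gA i k (θ k) - gradient (f i) (θ k))‖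
              ≤ ∑ _i : Fin N, LbarH * ((2 * R₀ * δ ^ (((k:ℝ) - m k)/2)) ^ ((3:ℝ)/2)
                * (2 * γ * L * R₀ * m k) ^ ((1:ℝ)/2)) :=
            (norm_sum_le _ _).trans (Finset.sum_le_sum fun i _ => he i)
          rw [Finset.sum_const, Finset.card_univ, Fintype.card_fin, nsmul_eq_mul] at h3
          calc (N:ℝ)⁻¹ * ‖∑ i, (gA i k (θ k) - gradient (f i) (θ k))‖
              ≤ (N:ℝ)⁻¹ * ((N:ℝ) * (LbarH * ((2 * R₀ * δ ^ (((k:ℝ) - m k)/2)) ^ ((3:ℝ)/2)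
                * (2 * γ * L * R₀ * m k) ^ ((1:ℝ)/2)))) := by
                exact mul_le_mul_of_nonneg_left h3 (by positivity)
            _ = _ := by field_simp
        calc ‖_ + _‖ ≤ _ + _ := norm_add_le _ _
          _ ≤ _ := by linarith
      -- the numeric estimate
      refine hEk.trans ?_
      have hBa32 : (2 * R₀ * δ ^ (((k:ℝ) - m k)/2)) ^ ((3:ℝ)/2)
          = (2 * R₀) ^ ((3:ℝ)/2) * δ ^ ((((k:ℝ) - m k)/2) * ((3:ℝ)/2)) := by
        rw [Real.mul_rpow (by positivity) (Real.rpow_nonneg hδ0.le _),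
          ← Real.rpow_mul hδ0.le]
      have hBb12 : (2 * γ * L * R₀ * m k) ^ ((1:ℝ)/2)
          = (2 * R₀) ^ ((1:ℝ)/2) * (γ ^ ((1:ℝ)/2) * (L ^ ((1:ℝ)/2) * m k ^ ((1:ℝ)/2))) := by
        rw [show 2 * γ * L * R₀ * m k = (2 * R₀) * (γ * (L * m k)) by ring]
        rw [Real.mul_rpow (by positivity) (by positivity),
          Real.mul_rpow hγ0.le (by positivity), Real.mul_rpow hL.le hmk0.le]
      have h2R2 : (2 * R₀) ^ ((3:ℝ)/2) * (2 * R₀) ^ ((1:ℝ)/2) = 4 * R₀ ^ 2 := by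
        rw [← Real.rpow_add (by positivity)]
        rw [show (3:ℝ)/2 + 1/2 = ((2:ℕ):ℝ) by norm_num, Real.rpow_natCast]
        ring
      -- exponent bounds
      have hexp1 : δ ^ ((((k:ℝ) - m k)/2) * ((3:ℝ)/2))
          ≤ δ ^ ((k:ℝ)/2) * (δ ^ ((k:ℝ)/8) * (1 - Δ) ^ (-(3 * m₀ / 8))) := by
        have hlin := hmlin k hk1'
        have e1 : δ ^ ((((k:ℝ) - m k)/2) * ((3:ℝ)/2))
            ≤ δ ^ ((k:ℝ)/2 + ((k:ℝ)/8 + (-(3 * m₀ / 8)))) := by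
          apply Real.rpow_le_rpow_of_exponent_ge hδ0 hδ1.le
          linarith [hlin, mul_nonneg hβ0.le hk0R.le]
        have e2 : δ ^ ((k:ℝ)/2 + ((k:ℝ)/8 + (-(3 * m₀ / 8))))
            = δ ^ ((k:ℝ)/2) * (δ ^ ((k:ℝ)/8) * δ ^ (-(3 * m₀ / 8))) := by
          rw [Real.rpow_add hδ0, Real.rpow_add hδ0]
        have e3 : δ ^ (-(3 * m₀ / 8)) ≤ (1 - Δ) ^ (-(3 * m₀ / 8)) := by
          rw [Real.rpow_neg hδ0.le, Real.rpow_neg h1Δ.le]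
          exact inv_anti₀ (Real.rpow_pos_of_pos h1Δ _)
            (Real.rpow_le_rpow h1Δ.le hδlb (by positivity))
        calc δ ^ ((((k:ℝ) - m k)/2) * ((3:ℝ)/2))
            ≤ δ ^ ((k:ℝ)/2) * (δ ^ ((k:ℝ)/8) * δ ^ (-(3 * m₀ / 8))) := e1.trans_eq e2
          _ ≤ _ := by
              exact mul_le_mul_of_nonneg_left
                (mul_le_mul_of_nonneg_left e3 (Real.rpow_nonneg hδ0.le _))
                (Real.rpow_nonneg hδ0.le _)
      have hexp2 : m k ^ ((1:ℝ)/2) ≤ Real.exp (c₀ / 8) * (k:ℝ) ^ ((1:ℝ)/8) := by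
        have hlog := hmlog k hk1'
        rw [Real.rpow_def_of_pos hmk0, Real.rpow_def_of_pos hk0R, ← Real.exp_add]
        apply Real.exp_le_exp.mpr
        linarith [hlog]
      have hexp3 : (k:ℝ) ^ ((1:ℝ)/8) * δ ^ ((k:ℝ)/8) ≤ (a * γ) ^ (-((1:ℝ)/8)) := by
        have hδk : δ ^ ((k:ℝ)/8) ≤ Real.exp (-(a * γ * (k:ℝ))) := by
          rw [Real.rpow_def_of_pos hδ0]
          apply Real.exp_le_exp.mpr
          have hlog : Real.log δ ≤ -(Δ * γ * (2 * μ * L / (μ + L))) := by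
            have := Real.log_le_sub_one_of_pos hδ0
            rw [hδdef] at this ⊢; linarith
          have e1 : Real.log δ * ((k:ℝ)/8) ≤ -(Δ * γ * (2 * μ * L / (μ + L))) * ((k:ℝ)/8) :=
            mul_le_mul_of_nonneg_right hlog (by positivity)
          have e2 : -(Δ * γ * (2 * μ * L / (μ + L))) * ((k:ℝ)/8) = -(a * γ * (k:ℝ)) := by
            rw [hadef]; field_simp; ring
          linarith [e1.trans_eq e2]
        calc (k:ℝ) ^ ((1:ℝ)/8) * δ ^ ((k:ℝ)/8)
            ≤ (k:ℝ) ^ ((1:ℝ)/8) * Real.exp (-(a * γ * (k:ℝ))) := by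
              exact mul_le_mul_of_nonneg_left hδk (Real.rpow_nonneg hk0R.le _)
          _ ≤ (a * γ) ^ (-((1:ℝ)/8)) := by
              have := sucag_pow_exp (a * γ) (k:ℝ) (by positivity) hk0R.le
              rw [show a * γ * (k:ℝ) = (a * γ) * (k:ℝ) by ring] at *
              exact this
      -- assemble
      have hsplitaγ : (a * γ) ^ (-((1:ℝ)/8)) = a ^ (-((1:ℝ)/8)) * γ ^ (-((1:ℝ)/8)) :=
        Real.mul_rpow ha.le hγ0.le
      have hγcomb : γ ^ ((1:ℝ)/2) * γ ^ (-((1:ℝ)/8)) = γ ^ ((3:ℝ)/8) := by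
        rw [← Real.rpow_add hγ0]; norm_num
      have hKγ : K * γ ^ ((3:ℝ)/8) ≤ σ / 3 := by
        have h1 : γ ^ ((3:ℝ)/8) ≤ ((σ / (3 * K)) ^ ((8:ℝ)/3)) ^ ((3:ℝ)/8) :=
          Real.rpow_le_rpow hγ0.le hγ1 (by norm_num)
        have h2 : ((σ / (3 * K)) ^ ((8:ℝ)/3)) ^ ((3:ℝ)/8) = σ / (3 * K) := by
          rw [← Real.rpow_mul (by positivity)]
          rw [show ((8:ℝ)/3) * ((3:ℝ)/8) = 1 by norm_num, Real.rpow_one]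
        have h3 : K * γ ^ ((3:ℝ)/8) ≤ K * (σ / (3 * K)) := by
          exact mul_le_mul_of_nonneg_left (h1.trans_eq h2) hK.le
        have h4 : K * (σ / (3 * K)) = σ / 3 := by field_simp
        linarith [h3.trans_eq h4]
      have heqT : 2 * (LbarH * ((2 * R₀ * δ ^ (((k:ℝ) - m k)/2)) ^ ((3:ℝ)/2)
            * (2 * γ * L * R₀ * m k) ^ ((1:ℝ)/2)))
          = 8 * LbarH * R₀ ^ 2 * L ^ ((1:ℝ)/2) * γ ^ ((1:ℝ)/2)
            * (m k ^ ((1:ℝ)/2)) * δ ^ ((((k:ℝ) - m k)/2) * ((3:ℝ)/2)) := by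
        rw [hBa32, hBb12]
        linear_combination (2 * LbarH * γ ^ ((1:ℝ)/2) * L ^ ((1:ℝ)/2) * m k ^ ((1:ℝ)/2)
          * δ ^ ((((k:ℝ) - m k)/2) * ((3:ℝ)/2))) * h2R2
      calc 2 * (LbarH * ((2 * R₀ * δ ^ (((k:ℝ) - m k)/2)) ^ ((3:ℝ)/2)
            * (2 * γ * L * R₀ * m k) ^ ((1:ℝ)/2)))
          = 8 * LbarH * R₀ ^ 2 * L ^ ((1:ℝ)/2) * γ ^ ((1:ℝ)/2)
            * (m k ^ ((1:ℝ)/2)) * δ ^ ((((k:ℝ) - m k)/2) * ((3:ℝ)/2)) := heqT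
        _ ≤ 8 * LbarH * R₀ ^ 2 * L ^ ((1:ℝ)/2) * γ ^ ((1:ℝ)/2)
            * (Real.exp (c₀ / 8) * (k:ℝ) ^ ((1:ℝ)/8))
            * (δ ^ ((k:ℝ)/2) * (δ ^ ((k:ℝ)/8) * (1 - Δ) ^ (-(3 * m₀ / 8)))) := by
            have hA0 : (0:ℝ) ≤ 8 * LbarH * R₀ ^ 2 * L ^ ((1:ℝ)/2) * γ ^ ((1:ℝ)/2) := by
              positivity
            exact mul_le_mul (mul_le_mul_of_nonneg_left hexp2 hA0) hexp1
              (Real.rpow_nonneg hδ0.le _) (by positivity)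
        _ = (8 * LbarH * R₀ ^ 2 * L ^ ((1:ℝ)/2) * γ ^ ((1:ℝ)/2) * Real.exp (c₀ / 8)
              * (1 - Δ) ^ (-(3 * m₀ / 8)))
            * ((k:ℝ) ^ ((1:ℝ)/8) * δ ^ ((k:ℝ)/8)) * δ ^ ((k:ℝ)/2) := by ring
        _ ≤ (8 * LbarH * R₀ ^ 2 * L ^ ((1:ℝ)/2) * γ ^ ((1:ℝ)/2) * Real.exp (c₀ / 8)
              * (1 - Δ) ^ (-(3 * m₀ / 8)))
            * ((a * γ) ^ (-((1:ℝ)/8))) * δ ^ ((k:ℝ)/2) := by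
            refine mul_le_mul_of_nonneg_right ?_ (Real.rpow_nonneg hδ0.le _)
            exact mul_le_mul_of_nonneg_left hexp3 (by positivity)
        _ = K * γ ^ ((3:ℝ)/8) * R₀ * δ ^ ((k:ℝ)/2) := by
            rw [hKdef, hsplitaγ, ← hγcomb]; ring
        _ ≤ σ / 3 * δ ^ ((k:ℝ)/2) * R₀ := by
            have h5 : (0:ℝ) ≤ R₀ * δ ^ ((k:ℝ)/2) := by positivity
            have h6 := mul_le_mul_of_nonneg_right hKγ h5
            linarith [h6]
  -- the main induction
  have hσL : σ ≤ L := by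
    rw [hσdef, div_le_iff₀ hμL]
    have h1 : 0 < Δ * (μ * L) := by positivity
    have h2 : 0 < L * L := by positivity
    nlinarith [h1, h2]
  have hδσγ : σ * γ ≤ (1 - Δ)/2 := by
    have e1 : σ * γ ≤ σ * (2/(μ + L)) := mul_le_mul_of_nonneg_left hγ2 hσ.le
    have e2 : σ * (2/(μ + L)) = (1 - Δ) * (2 * μ * L / (μ + L) ^ 2) := by
      rw [hσdef]; field_simp
    have e3 : 2 * μ * L / (μ + L) ^ 2 ≤ 1/2 := by
      rw [div_le_iff₀ (by positivity)]; linarith [h4μL]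
    have e4 := mul_le_mul_of_nonneg_left e3 h1Δ.le
    linarith [e1, e2, e4]
  have hQ : ∀ k : ℕ, (∀ j, j ≤ k → ‖θ j - θstar‖ ^ 2 ≤ δ ^ j * R₀ ^ 2)
      ∧ (∀ j, j < k → ‖g j‖ ≤ 2 * L * R₀) := by
    intro k
    induction k with
    | zero =>
      constructor
      · intro j hj
        have hj0 : j = 0 := Nat.le_zero.mp hj
        subst hj0
        rw [hθ0]; simp
      · intro j hj; exact absurd hj (Nat.not_lt_zero j)
    | succ n ih =>
      obtain ⟨ihr, ihg⟩ := ih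
      have hE := hEbound n ihr ihg
      have hXle : δ ^ ((n:ℝ)/2) ≤ 1 := Real.rpow_le_one hδ0.le hδ1.le (by positivity)
      have hX0 : (0:ℝ) ≤ δ ^ ((n:ℝ)/2) * R₀ := by positivity
      have hrn : ‖θ n - θstar‖ ≤ δ ^ ((n:ℝ)/2) * R₀ := hroot n (ihr n le_rfl)
      have hgn : ‖g n‖ ≤ 2 * L * R₀ := by
        have h1 : g n = gradient F (θ n) + (g n - gradient F (θ n)) := by abel
        have h2 := norm_add_le (gradient F (θ n)) (g n - gradient F (θ n))
        rw [← h1] at h2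
        have h3 : ‖gradient F (θ n)‖ ≤ L * R₀ := by
          calc ‖gradient F (θ n)‖ ≤ L * ‖θ n - θstar‖ := hLip1 (θ n)
            _ ≤ L * (δ ^ ((n:ℝ)/2) * R₀) := mul_le_mul_of_nonneg_left hrn hL.le
            _ ≤ L * R₀ := by
                have h5 := mul_le_mul_of_nonneg_right hXle hR₀.le
                have h6 := mul_le_mul_of_nonneg_left h5 hL.le
                rw [one_mul] at h6
                linarith
        have h4 : ‖g n - gradient F (θ n)‖ ≤ L * R₀ := by
          refine hE.trans ?_
          have h7 : σ / 3 * δ ^ ((n:ℝ)/2) * R₀ ≤ σ / 3 * 1 * R₀ :=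
            mul_le_mul_of_nonneg_right
              (mul_le_mul_of_nonneg_left hXle (by positivity)) hR₀.le
          have h8 := mul_le_mul_of_nonneg_right hσL hR₀.le
          linarith [mul_nonneg hσ.le hR₀.le]
        linarith
      constructor
      · intro j hj
        rcases Nat.lt_succ_iff_lt_or_eq.mp (Nat.lt_succ_of_le hj) with hj' | hj'
        · exact ihr j (Nat.lt_succ_iff.mp hj')
        · subst hj'
          obtain ⟨hu2, hu1⟩ := hcontr (θ n)
          have hδσγ0 : 0 ≤ δ - σ * γ := by
            have : σ * γ ≤ (1 - Δ)/2 := hδσγ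
            linarith
          have hu2X : ‖θ n - θstar - γ • gradient F (θ n)‖ ^ 2
              ≤ (δ - σ * γ) * (δ ^ ((n:ℝ)/2) * R₀) ^ 2 := by
            refine hu2.trans ?_
            exact mul_le_mul_of_nonneg_left
              (pow_le_pow_left₀ (norm_nonneg _) hrn 2) hδσγ0
          have huX : ‖θ n - θstar - γ • gradient F (θ n)‖ ≤ δ ^ ((n:ℝ)/2) * R₀ :=
            hu1.trans hrn
          have hwX : ‖γ • (g n - gradient F (θ n))‖ ≤ γ * (σ / 3) * (δ ^ ((n:ℝ)/2) * R₀) := by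
            rw [norm_smul, Real.norm_eq_abs, abs_of_pos hγ0]
            calc γ * ‖g n - gradient F (θ n)‖ ≤ γ * (σ / 3 * δ ^ ((n:ℝ)/2) * R₀) :=
                  mul_le_mul_of_nonneg_left hE hγ0.le
              _ = γ * (σ / 3) * (δ ^ ((n:ℝ)/2) * R₀) := by ring
          have hsplit2 : θ (n + 1) - θstar
              = (θ n - θstar - γ • gradient F (θ n)) - γ • (g n - gradient F (θ n)) := by
            rw [hθrec n, smul_sub]; abel
          have h1 : ‖θ (n + 1) - θstar‖
              ≤ ‖θ n - θstar - γ • gradient F (θ n)‖ + ‖γ • (g n - gradient F (θ n))‖ := by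
            rw [hsplit2]; exact norm_sub_le _ _
          have h2 : ‖θ (n + 1) - θstar‖ ^ 2
              ≤ (‖θ n - θstar - γ • gradient F (θ n)‖ + ‖γ • (g n - gradient F (θ n))‖) ^ 2 :=
            pow_le_pow_left₀ (norm_nonneg _) h1 2
          have hX2 : (δ ^ ((n:ℝ)/2) * R₀) ^ 2 = δ ^ n * R₀ ^ 2 := by
            rw [mul_pow, hhalf n]
          have hfin : ‖θ (n + 1) - θstar‖ ^ 2 ≤ δ * (δ ^ ((n:ℝ)/2) * R₀) ^ 2 := by
            have hq := sucag_quad (norm_nonneg (γ • (g n - gradient F (θ n)))) hX0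
              (mul_nonneg hσ.le hγ0.le) (by linarith [hγσ3]) hu2X huX
              (by linarith [hwX] : ‖γ • (g n - gradient F (θ n))‖
                ≤ (σ * γ) / 3 * (δ ^ ((n:ℝ)/2) * R₀))
            linarith [h2, hq]
          calc ‖θ (n + 1) - θstar‖ ^ 2 ≤ δ * (δ ^ ((n:ℝ)/2) * R₀) ^ 2 := hfin
            _ = δ ^ (n + 1) * R₀ ^ 2 := by rw [hX2, pow_succ]; ring
      · intro j hj
        rcases Nat.lt_succ_iff_lt_or_eq.mp hj with hj' | hj'
        · exact ihg j hj'
        · subst hj'; exact hgn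
  intro k
  rw [hθ0]
  exact (hQ k).1 k le_rfl
end

section
/- Let p, δ ∈ (0,1), η > 1, q ≥ 0, and let (m₁^(k))_{k≥0}, (m₂^(k))_{k≥0} be sequences of nonnegative reals, with m₂^(k) an integer for each k. Define R̄ : ℕ → ℝ by a given R̄(0) > 0 and R̄(k+1) := p R̄(k) + q m₁^(k) max_{(k − m₂^(k))_+ ≤ ℓ ≤ k} R̄(ℓ)^{η}, where the max is over integers ℓ. Suppose R̄(k) ≤ δ^k R̄(0) for all k ≥ 0. Then R̄(k) > 0 for all k, and for every k ≥ 0: R̄(k+1)/R̄(k) ≤ p + q R̄(0)^{η−1} m₁^(k) p^{−m₂^(k)} δ^{(η−1)(k − m₂^(k))}. -/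
open scoped BigOperators

/-- ratio bound for the upper-bound sequence `R̄` in the proof of
part (ii) of the lemma on nonlinear delayed recursions. The powers with real
exponents (`p^{−m₂^(k)}`, `δ^{(η−1)(k−m₂^(k))}`, `R̄(ℓ)^η`, `R̄(0)^{η−1}`) are
real powers (`Real.rpow`). -/
theorem upper_bound_sequence_ratio_bound
    (p δ η q : ℝ)
    (hp0 : 0 < p) (hp1 : p < 1) (hδ0 : 0 < δ) (hδ1 : δ < 1)
    (hη : 1 < η) (hq : 0 ≤ q)
    (m₁ : ℕ → ℝ) (hm₁ : ∀ k, 0 ≤ m₁ k)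
    (m₂ : ℕ → ℕ)
    (Rbar : ℕ → ℝ) (hR0 : 0 < Rbar 0)
    (hrec : ∀ k : ℕ, Rbar (k + 1) = p * Rbar k + q * m₁ k *
      (Finset.Icc (k - m₂ k) k).sup'
        (Finset.nonempty_Icc.mpr (Nat.sub_le k (m₂ k)))
        (fun ℓ => Rbar ℓ ^ η))
    (hgeom : ∀ k : ℕ, Rbar k ≤ δ ^ k * Rbar 0) :
    (∀ k, 0 < Rbar k) ∧
    ∀ k : ℕ, Rbar (k + 1) / Rbar k
      ≤ p + q * Rbar 0 ^ (η - 1) * m₁ k * p ^ (-(m₂ k : ℝ))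
          * δ ^ ((η - 1) * ((k : ℝ) - (m₂ k : ℝ))) := by
  have hpos : ∀ k, 0 < Rbar k := by
    intro k
    induction k with
    | zero => exact hR0
    | succ n ih =>
      rw [hrec n]
      have hsup : Rbar n ^ η ≤ (Finset.Icc (n - m₂ n) n).sup'
          (Finset.nonempty_Icc.mpr (Nat.sub_le n (m₂ n))) (fun ℓ => Rbar ℓ ^ η) :=
        Finset.le_sup' (fun ℓ => Rbar ℓ ^ η) (Finset.mem_Icc.mpr ⟨Nat.sub_le _ _, le_refl n⟩)
      have h0 : 0 < Rbar n ^ η := Real.rpow_pos_of_pos ih η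
      have h2 : 0 ≤ q * m₁ n * (Finset.Icc (n - m₂ n) n).sup'
          (Finset.nonempty_Icc.mpr (Nat.sub_le n (m₂ n))) (fun ℓ => Rbar ℓ ^ η) :=
        mul_nonneg (mul_nonneg hq (hm₁ n)) (le_trans h0.le hsup)
      nlinarith [mul_pos hp0 ih]
  have hstep : ∀ k, p * Rbar k ≤ Rbar (k + 1) := by
    intro n
    rw [hrec n]
    have hsup : Rbar n ^ η ≤ (Finset.Icc (n - m₂ n) n).sup'
        (Finset.nonempty_Icc.mpr (Nat.sub_le n (m₂ n))) (fun ℓ => Rbar ℓ ^ η) :=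
      Finset.le_sup' (fun ℓ => Rbar ℓ ^ η) (Finset.mem_Icc.mpr ⟨Nat.sub_le _ _, le_refl n⟩)
    have h0 : 0 < Rbar n ^ η := Real.rpow_pos_of_pos (hpos n) η
    have h2 : 0 ≤ q * m₁ n * (Finset.Icc (n - m₂ n) n).sup'
        (Finset.nonempty_Icc.mpr (Nat.sub_le n (m₂ n))) (fun ℓ => Rbar ℓ ^ η) :=
      mul_nonneg (mul_nonneg hq (hm₁ n)) (le_trans h0.le hsup)
    linarith
  have hchain : ∀ ℓ k : ℕ, ℓ ≤ k → p ^ (k - ℓ) * Rbar ℓ ≤ Rbar k := by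
    intro ℓ k hlk
    induction k, hlk using Nat.le_induction with
    | base => simp
    | succ n hn ih =>
      have h1 : n + 1 - ℓ = (n - ℓ) + 1 := by omega
      calc p ^ (n + 1 - ℓ) * Rbar ℓ = p * (p ^ (n - ℓ) * Rbar ℓ) := by
            rw [h1, pow_succ]; ring
        _ ≤ p * Rbar n := mul_le_mul_of_nonneg_left ih hp0.le
        _ ≤ Rbar (n + 1) := hstep n
  refine ⟨hpos, ?_⟩
  intro k
  rw [div_le_iff₀ (hpos k), hrec k]
  set S := (Finset.Icc (k - m₂ k) k).sup'
      (Finset.nonempty_Icc.mpr (Nat.sub_le k (m₂ k))) (fun ℓ => Rbar ℓ ^ η) with hSdef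
  have hS : S ≤ Rbar 0 ^ (η - 1) * δ ^ ((η - 1) * ((k : ℝ) - (m₂ k : ℝ)))
      * (p ^ (-(m₂ k : ℝ)) * Rbar k) := by
    apply Finset.sup'_le
    intro ℓ hℓ
    obtain ⟨h1, h2⟩ := Finset.mem_Icc.mp hℓ
    have hkℓ : k - ℓ ≤ m₂ k := by omega
    have hRℓ : Rbar ℓ ≤ p ^ (-(m₂ k : ℝ)) * Rbar k := by
      have hc := hchain ℓ k h2
      have h1' : Rbar ℓ ≤ (p ^ (k - ℓ))⁻¹ * Rbar k := by
        rw [inv_mul_eq_div, le_div_iff₀ (pow_pos hp0 _)]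
        nlinarith
      refine h1'.trans (mul_le_mul_of_nonneg_right ?_ (hpos k).le)
      rw [← Real.rpow_natCast p (k - ℓ), ← Real.rpow_neg hp0.le]
      apply Real.rpow_le_rpow_of_exponent_ge hp0 hp1.le
      have : ((k - ℓ : ℕ) : ℝ) ≤ (m₂ k : ℝ) := by exact_mod_cast hkℓ
      linarith
    have hη1 : (0 : ℝ) ≤ η - 1 := by linarith
    have hRℓη1 : Rbar ℓ ^ (η - 1)
        ≤ Rbar 0 ^ (η - 1) * δ ^ ((η - 1) * ((k : ℝ) - (m₂ k : ℝ))) := by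
      have hgl := hgeom ℓ
      have hcast : (k : ℝ) - (m₂ k : ℝ) ≤ (ℓ : ℝ) := by
        have : ((k - m₂ k : ℕ) : ℝ) ≤ (ℓ : ℝ) := by exact_mod_cast h1
        have h3 : (k : ℝ) - (m₂ k : ℝ) ≤ ((k - m₂ k : ℕ) : ℝ) := by
          rcases le_or_gt (m₂ k) k with h | h
          · rw [Nat.cast_sub h]
          · have : k - m₂ k = 0 := by omega
            rw [this]; push_cast; have : (k : ℝ) ≤ (m₂ k : ℝ) := by exact_mod_cast h.le
            linarith
        linarith
      calc Rbar ℓ ^ (η - 1) ≤ (δ ^ ℓ * Rbar 0) ^ (η - 1) :=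
            Real.rpow_le_rpow (hpos ℓ).le hgl hη1
        _ = (δ ^ ℓ) ^ (η - 1) * Rbar 0 ^ (η - 1) :=
            Real.mul_rpow (pow_nonneg hδ0.le _) hR0.le
        _ ≤ δ ^ ((η - 1) * ((k : ℝ) - (m₂ k : ℝ))) * Rbar 0 ^ (η - 1) := by
            apply mul_le_mul_of_nonneg_right _ (Real.rpow_nonneg hR0.le _)
            rw [← Real.rpow_natCast δ ℓ, ← Real.rpow_mul hδ0.le]
            apply Real.rpow_le_rpow_of_exponent_ge hδ0 hδ1.le
            nlinarith
        _ = Rbar 0 ^ (η - 1) * δ ^ ((η - 1) * ((k : ℝ) - (m₂ k : ℝ))) := by ring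
    have heq : Rbar ℓ ^ η = Rbar ℓ ^ (η - 1) * Rbar ℓ := by
      rw [← Real.rpow_add_one (hpos ℓ).ne' (η - 1)]; ring_nf
    show Rbar ℓ ^ η ≤ _
    rw [heq]
    exact mul_le_mul hRℓη1 hRℓ (hpos ℓ).le
      (mul_nonneg (Real.rpow_nonneg hR0.le _) (Real.rpow_nonneg hδ0.le _))
  have hmul := mul_le_mul_of_nonneg_left hS (mul_nonneg hq (hm₁ k))
  nlinarith [hmul]
end
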